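/- arXiv:2107.09107 — 6 statements merged into one kernel-verified Lean document; each statement's English description precedes it below -/
import Mathlib

section
/- For every fixed integer k ≥ 2, the average order of N_k is k(k-1); precisely, (1/M) · Σ_{a=3}^{M} N_k(a) → k(k-1) as M → ∞ (equivalently, including a = 2 does not change the limit). -/
/-- `Nk k a` is the number of `k`-tuples `(m₁, …, m_k)` of nonnegative integers whose
multinomial coefficient `(m₁ + ⋯ + m_k)! / (m₁! ⋯ m_k!)` equals `a`. -/
noncomputable def Nk (k : ℕ) (a : ℕ) : ℕ :=
  {m : Fin k → ℕ | Nat.multinomial Finset.univ m = a}.ncard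

namespace AvgNkAux

open Finset Filter


/-- product of two factorials bound -/
lemma fact_mul_fact_le {a : ℕ} (ha : 1 ≤ a) : ∀ {b : ℕ}, 1 ≤ b →
    a.factorial * b.factorial ≤ (a + b - 1).factorial := by
  intro b
  induction b with
  | zero => omega
  | succ b ih =>
    intro _
    rcases Nat.eq_zero_or_pos b with hb | hb
    · subst hb; simpa using Nat.le_refl _
    · have h1 := ih hb
      have h2 : a + (b + 1) - 1 = (a + b - 1) + 1 := by omega
      rw [h2, Nat.factorial_succ, Nat.factorial_succ]
      calc a.factorial * ((b + 1) * b.factorial)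
          = (a.factorial * b.factorial) * (b + 1) := by ring
        _ ≤ (a + b - 1).factorial * (b + 1) := Nat.mul_le_mul_right _ h1
        _ ≤ (a + b - 1).factorial * (a + b - 1 + 1) := by
            exact Nat.mul_le_mul_left _ (by omega)
        _ = (a + b - 1 + 1) * (a + b - 1).factorial := by ring

/-- n ≤ choose n c for 1 ≤ c < n -/
lemma le_choose {n c : ℕ} (h1 : 1 ≤ c) (h2 : c < n) : n ≤ n.choose c := by
  have hfact : c.factorial * (n - c).factorial ≤ (n - 1).factorial := by
    have := fact_mul_fact_le h1 (b := n - c) (by omega)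
    have he : c + (n - c) - 1 = n - 1 := by omega
    rwa [he] at this
  have hn : 0 < n := by omega
  have key : n * (n - 1).factorial = n.choose c * (c.factorial * (n - c).factorial) := by
    rw [Nat.mul_factorial_pred hn.ne', ← Nat.choose_mul_factorial_mul_factorial (le_of_lt h2), mul_assoc]
  have : n * (c.factorial * (n - c).factorial) ≤ n.choose c * (c.factorial * (n - c).factorial) := by
    calc n * (c.factorial * (n - c).factorial) ≤ n * (n-1).factorial :=
          Nat.mul_le_mul_left _ hfact
      _ = n.choose c * (c.factorial * (n - c).factorial) := key
  exact Nat.le_of_mul_le_mul_right this (by positivity)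

lemma choose_le_multinomial {α : Type*} [DecidableEq α] (s : Finset α) (m : α → ℕ) {i : α}
    (hi : i ∈ s) : (∑ j ∈ s, m j).choose (m i) ≤ Nat.multinomial s m := by
  rw [← Finset.insert_erase hi, Nat.multinomial_insert (Finset.notMem_erase _ _),
    Finset.sum_insert (Finset.notMem_erase _ _)]
  exact Nat.le_mul_of_pos_right _ (Nat.multinomial_pos _ _)

lemma choose_add_mono (b : ℕ) : ∀ {t s : ℕ}, s ≤ t → (b + s).choose s ≤ (b + t).choose t := by
  intro t
  induction t with
  | zero =>
    intro s hs
    have : s = 0 := by omega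
    subst this; simp
  | succ t ih =>
    intro s hs
    rcases Nat.eq_or_lt_of_le hs with h | h
    · subst h; exact le_rfl
    · have h1 : (b + s).choose s ≤ (b + t).choose t := ih (by omega)
      have h2 : (b + (t+1)).choose (t+1) = (b + t).choose t + (b + t).choose (t + 1) := by
        have : b + (t + 1) = (b + t) + 1 := by omega
        rw [this, Nat.choose_succ_succ']
      omega

lemma two_pow_le_central (c : ℕ) : 2 ^ c ≤ (2 * c).choose c := by
  induction c with
  | zero => simp
  | succ c ih =>
    have key := Nat.add_one_mul_choose_eq (2 * c + 1) c
    have h1 : (2 * c).choose c ≤ (2 * c + 1).choose c := Nat.choose_le_choose c (by omega)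
    have h2 : 2 ^ (c + 1) * (c + 1) ≤ (2 * c + 1 + 1).choose (c + 1) * (c + 1) := by
      calc 2 ^ (c + 1) * (c + 1) = 2 ^ c * (2 * c + 1 + 1) := by ring
        _ ≤ (2 * c + 1).choose c * (2 * c + 1 + 1) := Nat.mul_le_mul_right _ (le_trans ih h1)
        _ = (2 * c + 1).succ * (2 * c + 1).choose c := by
              rw [Nat.succ_eq_add_one, mul_comm]
        _ = (2 * c + 1 + 1).choose (c + 1) * (c + 1) := key
    have h3 := Nat.le_of_mul_le_mul_right h2 (by omega)
    have : 2 * (c + 1) = 2 * c + 1 + 1 := by omega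
    rw [this]
    exact h3

lemma two_pow_le_choose {c x : ℕ} (h : 2 * c ≤ x) : 2 ^ c ≤ x.choose c :=
  le_trans (two_pow_le_central c) (Nat.choose_le_choose c h)

/-- chain lower bound -/
lemma two_pow_le_multinomial_insert {α : Type*} [DecidableEq α] (i0 : α) (m : α → ℕ) :
    ∀ T : Finset α, i0 ∉ T → (∀ j ∈ T, m j ≤ m i0) →
      2 ^ (∑ j ∈ T, m j) ≤ Nat.multinomial (insert i0 T) m := by
  intro T
  induction T using Finset.induction_on with
  | empty => simp
  | @insert j T hjT ih =>
    intro hi0 hb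
    have hji0 : j ≠ i0 := fun h => hi0 (by simp [h])
    have hi0T : i0 ∉ T := fun h => hi0 (Finset.mem_insert_of_mem h)
    have hjmem : j ∉ insert i0 T := by simp [hji0, hjT]
    rw [Finset.insert_comm, Nat.multinomial_insert hjmem, Finset.sum_insert hjT]
    have hsum : ∑ l ∈ insert i0 T, m l = m i0 + ∑ l ∈ T, m l := Finset.sum_insert hi0T
    have hfac : 2 ^ (m j) ≤ (m j + ∑ l ∈ insert i0 T, m l).choose (m j) := by
      apply two_pow_le_choose
      have := hb j (Finset.mem_insert_self _ _)
      omega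
    have hrest : 2 ^ (∑ l ∈ T, m l) ≤ Nat.multinomial (insert i0 T) m :=
      ih hi0T (fun l hl => hb l (Finset.mem_insert_of_mem hl))
    calc 2 ^ (m j + ∑ l ∈ T, m l) = 2 ^ (m j) * 2 ^ (∑ l ∈ T, m l) := pow_add 2 _ _
      _ ≤ _ := Nat.mul_le_mul hfac hrest



lemma multinomial_union_zero {α : Type*} [DecidableEq α] (m : α → ℕ) (T : Finset α) :
    ∀ S : Finset α, (∀ l ∈ S, m l = 0) → Nat.multinomial (T ∪ S) m = Nat.multinomial T m := by
  intro S
  induction S using Finset.induction_on with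
  | empty => simp
  | @insert l S hlS ih =>
    intro hz
    have hz' : ∀ x ∈ S, m x = 0 := fun x hx => hz x (Finset.mem_insert_of_mem hx)
    rw [Finset.union_insert]
    by_cases hl : l ∈ T ∪ S
    · rw [Finset.insert_eq_self.mpr hl]; exact ih hz'
    · rw [Nat.multinomial_insert hl, hz l (Finset.mem_insert_self _ _)]
      simp [ih hz']

lemma multinomial_support {k : ℕ} (m : Fin k → ℕ) (T : Finset (Fin k))
    (h : ∀ l, l ∉ T → m l = 0) :
    Nat.multinomial Finset.univ m = Nat.multinomial T m := by
  have : (Finset.univ : Finset (Fin k)) = T ∪ (Finset.univ \ T) := by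
    rw [Finset.union_sdiff_of_subset (Finset.subset_univ T)]
  rw [this, multinomial_union_zero m T _ (fun l hl => h l (Finset.mem_sdiff.mp hl).2)]

lemma multinomial_single_support {k : ℕ} (m : Fin k → ℕ) (i : Fin k)
    (h : ∀ l, l ≠ i → m l = 0) : Nat.multinomial Finset.univ m = 1 := by
  rw [multinomial_support m {i} (fun l hl => h l (by simpa using hl))]
  simp

lemma multinomial_pair {k : ℕ} {i j : Fin k} (hij : i ≠ j) (m : Fin k → ℕ)
    (h : ∀ l, l ≠ i → l ≠ j → m l = 0) :
    Nat.multinomial Finset.univ m = (m i + m j).choose (m i) := by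
  rw [multinomial_support m {i, j} (fun l hl => by
      simp only [Finset.mem_insert, Finset.mem_singleton] at hl; push_neg at hl
      exact h l hl.1 hl.2)]
  have hjmem : i ∉ ({j} : Finset (Fin k)) := by simpa using hij
  rw [show ({i, j} : Finset (Fin k)) = insert i {j} from rfl,
    Nat.multinomial_insert hjmem, Finset.sum_singleton, Nat.multinomial_singleton, mul_one]

/-- the standard tuple: `a-1` at `p.1`, `1` at `p.2`, `0` elsewhere. -/
def std {k : ℕ} (a : ℕ) (p : Fin k × Fin k) : Fin k → ℕ :=
  fun l => if l = p.1 then a - 1 else if l = p.2 then 1 else 0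

lemma std_multinomial {k a : ℕ} (ha : 2 ≤ a) {p : Fin k × Fin k} (hp : p.1 ≠ p.2) :
    Nat.multinomial Finset.univ (std a p) = a := by
  rw [multinomial_pair hp (std a p) (fun l h1 h2 => by simp [std, h1, h2])]
  have h1 : std a p p.1 = a - 1 := by simp [std]
  have h2 : std a p p.2 = 1 := by simp [std, hp.symm]
  rw [h1, h2]
  have : a - 1 + 1 = a := by omega
  rw [this]
  rw [← Nat.choose_symm (by omega : a - 1 ≤ a), show a - (a-1) = 1 by omega,
    Nat.choose_one_right]

lemma std_inj {k a : ℕ} (ha : 3 ≤ a) {p q : Fin k × Fin k} (hp : p.1 ≠ p.2) (hq : q.1 ≠ q.2)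
    (h : std a p = std a q) : p = q := by
  have h1 := congrFun h p.1
  have h2 := congrFun h p.2
  simp only [std, eq_self_iff_true, if_true] at h1 h2
  rw [if_neg hp.symm] at h2
  have hfst : p.1 = q.1 := by
    by_contra hne
    rw [if_neg hne] at h1
    by_cases h' : p.1 = q.2
    · rw [if_pos h'] at h1; omega
    · rw [if_neg h'] at h1; omega
  have hsnd : p.2 = q.2 := by
    by_contra hne
    by_cases h' : p.2 = q.1
    · rw [if_pos h'] at h2; omega
    · rw [if_neg h', if_neg hne] at h2; omega
  exact Prod.ext hfst hsnd

/-- classification of "plain" tuples -/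
lemma plain_classify {k : ℕ} (m : Fin k → ℕ) (i0 : Fin k)
    (h3 : 3 ≤ Nat.multinomial Finset.univ m)
    (hs : ∑ j ∈ Finset.univ.erase i0, m j ≤ 1) :
    ∃ j, j ≠ i0 ∧ m = std (Nat.multinomial Finset.univ m) (i0, j) := by
  rcases Nat.lt_or_ge (∑ j ∈ Finset.univ.erase i0, m j) 1 with hs0 | hs1
  · -- sum zero: single support, multinomial = 1, contradiction
    exfalso
    have hz : ∀ l, l ≠ i0 → m l = 0 := by
      intro l hl
      have : ∑ j ∈ Finset.univ.erase i0, m j = 0 := by omega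
      have := Finset.sum_eq_zero_iff.mp this l (Finset.mem_erase.mpr ⟨hl, Finset.mem_univ _⟩)
      exact this
    have := multinomial_single_support m i0 hz
    omega
  · -- sum = 1
    have hsum1 : ∑ j ∈ Finset.univ.erase i0, m j = 1 := by omega
    -- find j with m j ≥ 1
    have hex : ∃ j ∈ Finset.univ.erase i0, 1 ≤ m j := by
      by_contra hno
      push_neg at hno
      have : ∑ j ∈ Finset.univ.erase i0, m j = 0 :=
        Finset.sum_eq_zero (fun x hx => by have := hno x hx; omega)
      omega
    obtain ⟨j, hjmem, hj1⟩ := hex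
    have hji0 : j ≠ i0 := (Finset.mem_erase.mp hjmem).1
    have hsplit : m j + ∑ l ∈ (Finset.univ.erase i0).erase j, m l = 1 := by
      rw [Finset.add_sum_erase _ _ hjmem]; exact hsum1
    have hmj : m j = 1 := by omega
    have hrest : ∑ l ∈ (Finset.univ.erase i0).erase j, m l = 0 := by omega
    have hz : ∀ l, l ≠ i0 → l ≠ j → m l = 0 := by
      intro l h1 h2
      exact Finset.sum_eq_zero_iff.mp hrest l
        (Finset.mem_erase.mpr ⟨h2, Finset.mem_erase.mpr ⟨h1, Finset.mem_univ _⟩⟩)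
    have hmul : Nat.multinomial Finset.univ m = m i0 + 1 := by
      rw [multinomial_pair (Ne.symm hji0) m (fun l hl1 hl2 => hz l hl1 hl2), hmj]
      rw [← Nat.choose_symm (by omega : m i0 ≤ m i0 + 1), show m i0 + 1 - m i0 = 1 by omega,
        Nat.choose_one_right]
    refine ⟨j, hji0, ?_⟩
    funext l
    simp only [std]
    rcases eq_or_ne l i0 with rfl | hl1
    · rw [if_pos rfl]; omega
    · rw [if_neg hl1]
      rcases eq_or_ne l j with rfl | hl2
      · rw [if_pos rfl]; exact hmj
      · rw [if_neg hl2]; exact hz l hl1 hl2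




/-- if the multinomial is at least 2, the sum of the entries is at most the multinomial -/
lemma sum_le_multinomial {k : ℕ} (hk : 0 < k) (m : Fin k → ℕ)
    (h2 : 2 ≤ Nat.multinomial Finset.univ m) : ∑ j, m j ≤ Nat.multinomial Finset.univ m := by
  by_cases hpair : ∃ i j : Fin k, i ≠ j ∧ 1 ≤ m i ∧ 1 ≤ m j
  · obtain ⟨i, j, hij, hi, hj⟩ := hpair
    have hle : m i + m j ≤ ∑ l, m l := by
      have : ∑ l ∈ ({i, j} : Finset (Fin k)), m l ≤ ∑ l, m l :=
        Finset.sum_le_sum_of_subset (Finset.subset_univ _)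
      rwa [Finset.sum_insert (by simpa using hij), Finset.sum_singleton] at this
    have h1 : (∑ l, m l).choose (m i) ≤ Nat.multinomial Finset.univ m :=
      choose_le_multinomial _ m (Finset.mem_univ i)
    have h0 : ∑ l, m l ≤ (∑ l, m l).choose (m i) := le_choose hi (by omega)
    omega
  · exfalso
    push_neg at hpair
    -- get max index
    obtain ⟨i0, -, hi0⟩ := Finset.exists_mem_eq_sup (Finset.univ : Finset (Fin k))
      (Finset.univ_nonempty_iff.mpr (Fin.pos_iff_nonempty.mp hk)) m
    have hz : ∀ l, l ≠ i0 → m l = 0 := by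
      intro l hl
      by_contra hml
      have h1 : 1 ≤ m l := by omega
      have h2' : 1 ≤ m i0 := le_trans h1 (by rw [← hi0]; exact Finset.le_sup (Finset.mem_univ l))
      have := hpair l i0 hl h1
      omega
    have := multinomial_single_support m i0 hz
    omega

/-- bound on the max entry for sporadic tuples -/
lemma b_bound {k : ℕ} (m : Fin k → ℕ) (i0 : Fin k)
    (hs : 2 ≤ ∑ j ∈ Finset.univ.erase i0, m j) :
    (m i0 + 1) * (m i0 + 2) ≤ 2 * Nat.multinomial Finset.univ m := by
  set b := m i0 with hb
  set s := ∑ j ∈ Finset.univ.erase i0, m j with hsdef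
  have hn : ∑ j, m j = b + s := by
    rw [← Finset.add_sum_erase _ m (Finset.mem_univ i0)]
  have h1 : (b + s).choose b ≤ Nat.multinomial Finset.univ m := by
    have := choose_le_multinomial (Finset.univ : Finset (Fin k)) m (Finset.mem_univ i0)
    rwa [hn] at this
  have hsymm : (b + s).choose s = (b + s).choose b := by
    rw [← Nat.choose_symm (by omega : b ≤ b + s), show b + s - b = s by omega]
  have h2 : (b + 2).choose 2 ≤ (b + s).choose s := choose_add_mono b hs
  have h3 : 2 * (b + 2).choose 2 = (b + 1) * (b + 2) := by
    have hfac := Nat.choose_mul_factorial_mul_factorial (show 2 ≤ b + 2 by omega)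
    have he : b + 2 - 2 = b := by omega
    rw [he] at hfac
    have hf2 : (2 : ℕ).factorial = 2 := rfl
    rw [hf2] at hfac
    have hexp : (b + 2).factorial = (b + 2) * ((b + 1) * b.factorial) := by
      rw [show b + 2 = (b + 1) + 1 by omega, Nat.factorial_succ, Nat.factorial_succ]
    rw [hexp] at hfac
    have : ((b+2).choose 2 * 2) * b.factorial = ((b + 2) * (b + 1)) * b.factorial := by
      calc ((b+2).choose 2 * 2) * b.factorial = (b+2).choose 2 * 2 * b.factorial := rfl
        _ = (b + 2) * ((b + 1) * b.factorial) := hfac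
        _ = ((b + 2) * (b + 1)) * b.factorial := by ring
    have := Nat.eq_of_mul_eq_mul_right (Nat.factorial_pos b) this
    linarith
  calc (b + 1) * (b + 2) = 2 * (b + 2).choose 2 := h3.symm
    _ ≤ 2 * (b + s).choose s := by omega
    _ = 2 * (b + s).choose b := by rw [hsymm]
    _ ≤ 2 * Nat.multinomial Finset.univ m := by omega

/-- bound via powers of two -/
lemma s_bound {k : ℕ} (m : Fin k → ℕ) (i0 : Fin k) (hmax : ∀ j, m j ≤ m i0) :
    2 ^ (∑ j ∈ Finset.univ.erase i0, m j) ≤ Nat.multinomial Finset.univ m := by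
  have := two_pow_le_multinomial_insert i0 m (Finset.univ.erase i0)
    (Finset.notMem_erase _ _) (fun j _ => hmax j)
  rwa [Finset.insert_erase (Finset.mem_univ i0)] at this

/-- existence of max index with erase-sum equality -/
lemma exists_max {k : ℕ} (hk : 0 < k) (m : Fin k → ℕ) :
    ∃ i0 : Fin k, (∀ j, m j ≤ m i0) ∧
      (∑ j, m j) - Finset.univ.sup m = ∑ j ∈ Finset.univ.erase i0, m j := by
  obtain ⟨i0, -, hi0⟩ := Finset.exists_mem_eq_sup (Finset.univ : Finset (Fin k))
    (Finset.univ_nonempty_iff.mpr (Fin.pos_iff_nonempty.mp hk)) m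
  refine ⟨i0, fun j => by rw [← hi0]; exact Finset.le_sup (Finset.mem_univ j), ?_⟩
  have hn : ∑ j, m j = m i0 + ∑ j ∈ Finset.univ.erase i0, m j :=
    (Finset.add_sum_erase _ m (Finset.mem_univ i0)).symm
  omega





variable (k M : ℕ)

/-- ambient box -/
noncomputable def box : Finset (Fin k → ℕ) :=
  Fintype.piFinset fun _ : Fin k => Finset.range (M + 1)

/-- the tuples with multinomial equal to `a` -/
noncomputable def Fa (a : ℕ) : Finset (Fin k → ℕ) :=
  (box k M).filter (fun m => Nat.multinomial Finset.univ m = a)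

/-- sporadicity measure -/
def sp {k : ℕ} (m : Fin k → ℕ) : ℕ := (∑ j, m j) - Finset.univ.sup m

lemma mem_box_of_mult {k M a : ℕ} (hk : 0 < k) (ha : 3 ≤ a) (haM : a ≤ M)
    {m : Fin k → ℕ} (hm : Nat.multinomial Finset.univ m = a) : m ∈ box k M := by
  rw [box, Fintype.mem_piFinset]
  intro i
  rw [Finset.mem_range]
  have h1 : m i ≤ ∑ j, m j :=
    Finset.single_le_sum (fun j _ => Nat.zero_le (m j)) (Finset.mem_univ i)
  have h2 : ∑ j, m j ≤ Nat.multinomial Finset.univ m :=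
    sum_le_multinomial hk m (by omega)
  omega

lemma Nk_eq_card {k M a : ℕ} (hk : 0 < k) (ha : 3 ≤ a) (haM : a ≤ M) :
    Nk k a = (Fa k M a).card := by
  have hset : {m : Fin k → ℕ | Nat.multinomial Finset.univ m = a} = ↑(Fa k M a) := by
    ext m
    simp only [Set.mem_setOf_eq, Fa, Finset.coe_filter, Finset.mem_coe]
    constructor
    · intro h; exact ⟨mem_box_of_mult hk ha haM h, h⟩
    · intro h; exact h.2
  rw [Nk, hset, Set.ncard_coe_finset]

lemma std_mem_Fa {k M a : ℕ} (ha : 3 ≤ a) (haM : a ≤ M) {p : Fin k × Fin k}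
    (hp : p ∈ Finset.univ.offDiag) : std a p ∈ Fa k M a := by
  rw [Finset.mem_offDiag] at hp
  rw [Fa, Finset.mem_filter]
  refine ⟨?_, std_multinomial (by omega) hp.2.2⟩
  rw [box, Fintype.mem_piFinset]
  intro i
  rw [Finset.mem_range]
  simp only [std]
  split_ifs <;> omega

lemma lower_per_a {k M a : ℕ} (ha : 3 ≤ a) (haM : a ≤ M) :
    k * k - k ≤ (Fa k M a).card := by
  have hsub : Finset.image (std a) Finset.univ.offDiag ⊆ Fa k M a := by
    intro m hm
    obtain ⟨p, hp, rfl⟩ := Finset.mem_image.mp hm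
    exact std_mem_Fa ha haM hp
  have hcard : (Finset.image (std (k := k) a) Finset.univ.offDiag).card
      = (Finset.univ.offDiag : Finset (Fin k × Fin k)).card := by
    apply Finset.card_image_of_injOn
    intro p hp q hq h
    rw [Finset.mem_coe, Finset.mem_offDiag] at hp hq
    exact std_inj ha hp.2.2 hq.2.2 h
  have := Finset.card_le_card hsub
  rw [hcard, Finset.offDiag_card, Finset.card_univ, Fintype.card_fin] at this
  exact this

lemma upper_per_a {k M a : ℕ} (hk : 0 < k) (ha : 3 ≤ a) :
    (Fa k M a).card ≤ (k * k - k) +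
      ((Fa k M a).filter (fun m => 2 ≤ sp m)).card := by
  classical
  have hsplit := Finset.card_filter_add_card_filter_not
    (s := Fa k M a) (p := fun m => sp m ≤ 1)
  have hneg : (Fa k M a).filter (fun m => ¬ sp m ≤ 1)
      = (Fa k M a).filter (fun m => 2 ≤ sp m) := by
    apply Finset.filter_congr
    intro m _
    constructor <;> (intro h; omega)
  have hplain : ((Fa k M a).filter (fun m => sp m ≤ 1)).card ≤ k * k - k := by
    have hsub : (Fa k M a).filter (fun m => sp m ≤ 1) ⊆
        Finset.image (std a) Finset.univ.offDiag := by
      intro m hm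
      rw [Finset.mem_filter] at hm
      obtain ⟨hmFa, hsp⟩ := hm
      rw [Fa, Finset.mem_filter] at hmFa
      obtain ⟨-, hmul⟩ := hmFa
      obtain ⟨i0, hmax, hspeq⟩ := exists_max hk m
      have hs1 : ∑ j ∈ Finset.univ.erase i0, m j ≤ 1 := by rw [sp] at hsp; omega
      obtain ⟨j, hji0, hstd⟩ := plain_classify m i0 (by omega) hs1
      rw [Finset.mem_image]
      refine ⟨(i0, j), Finset.mem_offDiag.mpr ⟨Finset.mem_univ _, Finset.mem_univ _, Ne.symm hji0⟩, ?_⟩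
      rw [← hmul]; exact hstd.symm
    calc ((Fa k M a).filter (fun m => sp m ≤ 1)).card
        ≤ (Finset.image (std a) Finset.univ.offDiag).card := Finset.card_le_card hsub
      _ ≤ (Finset.univ.offDiag : Finset (Fin k × Fin k)).card := Finset.card_image_le
      _ = k * k - k := by rw [Finset.offDiag_card, Finset.card_univ, Fintype.card_fin]
  rw [hneg] at hsplit
  omega

/-- total count of sporadic tuples -/
lemma sporadic_total {k M : ℕ} (hk : 0 < k) (hM : 3 ≤ M) :
    ∑ a ∈ Finset.Icc 3 M, ((Fa k M a).filter (fun m => 2 ≤ sp m)).card ≤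
      k * ((Nat.sqrt (2 * M) + 1) * (Nat.log 2 M + 1) ^ (k - 1)) := by
  classical
  set B := Nat.sqrt (2 * M) with hB
  set L := Nat.log 2 M with hL
  set target : Finset (Fin k → ℕ) := Finset.univ.biUnion (fun i0 : Fin k =>
    Fintype.piFinset (fun j => Finset.range (if j = i0 then B + 1 else L + 1))) with htarget
  have hdisj : ∀ a ∈ Finset.Icc 3 M, ∀ b ∈ Finset.Icc 3 M, a ≠ b →
      Disjoint ((Fa k M a).filter (fun m => 2 ≤ sp m))
        ((Fa k M b).filter (fun m => 2 ≤ sp m)) := by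
    intro a _ b _ hab
    rw [Finset.disjoint_left]
    intro m hma hmb
    rw [Finset.mem_filter, Fa, Finset.mem_filter] at hma hmb
    exact hab (hma.1.2 ▸ hmb.1.2 ▸ rfl)
  rw [← Finset.card_biUnion hdisj]
  have hsub : (Finset.Icc 3 M).biUnion
      (fun a => (Fa k M a).filter (fun m => 2 ≤ sp m)) ⊆ target := by
    intro m hm
    rw [Finset.mem_biUnion] at hm
    obtain ⟨a, haIcc, hma⟩ := hm
    rw [Finset.mem_Icc] at haIcc
    rw [Finset.mem_filter, Fa, Finset.mem_filter] at hma
    obtain ⟨⟨-, hmul⟩, hsp⟩ := hma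
    obtain ⟨i0, hmax, hspeq⟩ := exists_max hk m
    have hs2 : 2 ≤ ∑ j ∈ Finset.univ.erase i0, m j := by rw [sp] at hsp; omega
    have hbb : m i0 ≤ B := by
      rw [hB, Nat.le_sqrt]
      have h1 := b_bound m i0 hs2
      have h2 : m i0 * m i0 ≤ (m i0 + 1) * (m i0 + 2) :=
        Nat.mul_le_mul (by omega) (by omega)
      omega
    have hss : ∑ j ∈ Finset.univ.erase i0, m j ≤ L := by
      rw [hL, Nat.le_log_iff_pow_le one_lt_two (by omega : M ≠ 0)]
      have := s_bound m i0 hmax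
      omega
    rw [htarget, Finset.mem_biUnion]
    refine ⟨i0, Finset.mem_univ _, ?_⟩
    rw [Fintype.mem_piFinset]
    intro j
    rw [Finset.mem_range]
    by_cases hj : j = i0
    · rw [if_pos hj, hj]; omega
    · rw [if_neg hj]
      have : m j ≤ ∑ l ∈ Finset.univ.erase i0, m l :=
        Finset.single_le_sum (fun l _ => Nat.zero_le (m l))
          (Finset.mem_erase.mpr ⟨hj, Finset.mem_univ _⟩)
      omega
  calc ((Finset.Icc 3 M).biUnion (fun a => (Fa k M a).filter (fun m => 2 ≤ sp m))).card
      ≤ target.card := Finset.card_le_card hsub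
    _ ≤ ∑ i0 : Fin k, (Fintype.piFinset
          (fun j => Finset.range (if j = i0 then B + 1 else L + 1))).card :=
        Finset.card_biUnion_le
    _ ≤ k * ((B + 1) * (L + 1) ^ (k - 1)) := by
        have hcard : ∀ i0 : Fin k, (Fintype.piFinset
            (fun j => Finset.range (if j = i0 then B + 1 else L + 1))).card
            = (B + 1) * (L + 1) ^ (k - 1) := by
          intro i0
          rw [Fintype.card_piFinset]
          have : ∀ j : Fin k, (Finset.range (if j = i0 then B + 1 else L + 1)).card
              = (if j = i0 then B + 1 else L + 1) := fun j => Finset.card_range _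
          rw [Finset.prod_congr rfl (fun j _ => this j)]
          rw [← Finset.mul_prod_erase Finset.univ _ (Finset.mem_univ i0), if_pos rfl]
          congr 1
          rw [Finset.prod_congr rfl (fun j hj => if_neg (Finset.mem_erase.mp hj).1),
            Finset.prod_const, Finset.card_erase_of_mem (Finset.mem_univ i0),
            Finset.card_univ, Fintype.card_fin]
        rw [Finset.sum_congr rfl (fun i0 _ => hcard i0), Finset.sum_const,
          Finset.card_univ, Fintype.card_fin, smul_eq_mul]

/-- main counting estimates -/
lemma S_lower {k M : ℕ} (hk : 0 < k) (hM : 3 ≤ M) :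
    (M - 2) * (k * k - k) ≤ ∑ a ∈ Finset.Icc 3 M, Nk k a := by
  have h1 : ∀ a ∈ Finset.Icc 3 M, k * k - k ≤ Nk k a := by
    intro a ha
    rw [Finset.mem_Icc] at ha
    rw [Nk_eq_card hk ha.1 ha.2]
    exact lower_per_a ha.1 ha.2
  calc (M - 2) * (k * k - k) = ∑ _a ∈ Finset.Icc 3 M, (k * k - k) := by
        rw [Finset.sum_const, Nat.card_Icc, smul_eq_mul,
          show M + 1 - 3 = M - 2 by omega]
    _ ≤ ∑ a ∈ Finset.Icc 3 M, Nk k a := Finset.sum_le_sum h1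

lemma S_upper {k M : ℕ} (hk : 0 < k) (hM : 3 ≤ M) :
    ∑ a ∈ Finset.Icc 3 M, Nk k a ≤ (M - 2) * (k * k - k) +
      k * ((Nat.sqrt (2 * M) + 1) * (Nat.log 2 M + 1) ^ (k - 1)) := by
  have h1 : ∀ a ∈ Finset.Icc 3 M, Nk k a ≤ (k * k - k) +
      ((Fa k M a).filter (fun m => 2 ≤ sp m)).card := by
    intro a ha
    rw [Finset.mem_Icc] at ha
    rw [Nk_eq_card hk ha.1 ha.2]
    exact upper_per_a hk ha.1
  calc ∑ a ∈ Finset.Icc 3 M, Nk k a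
      ≤ ∑ a ∈ Finset.Icc 3 M, ((k * k - k) +
          ((Fa k M a).filter (fun m => 2 ≤ sp m)).card) := Finset.sum_le_sum h1
    _ = (M - 2) * (k * k - k) +
          ∑ a ∈ Finset.Icc 3 M, ((Fa k M a).filter (fun m => 2 ≤ sp m)).card := by
        rw [Finset.sum_add_distrib, Finset.sum_const, Nat.card_Icc, smul_eq_mul,
          show M + 1 - 3 = M - 2 by omega]
    _ ≤ _ := by
        have := sporadic_total (k := k) (M := M) hk hM
        omega





/-- the sporadic count bound, in ℝ -/
lemma pointwise_bound (k : ℕ) (M : ℕ) (hM : 3 ≤ M) (hlog : 1 ≤ Real.log M) :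
    ((k * ((Nat.sqrt (2 * M) + 1) * (Nat.log 2 M + 1) ^ (k - 1)) : ℕ) : ℝ) / M ≤
      (3 * k * 6 ^ (k - 1)) * (Real.log (Real.sqrt M) ^ (k - 1) / Real.sqrt M) := by
  set x : ℝ := (M : ℝ) with hxdef
  have hx3 : (3 : ℝ) ≤ x := by rw [hxdef]; exact_mod_cast hM
  have hx0 : (0 : ℝ) < x := by linarith
  have hx1 : (1 : ℝ) ≤ x := by linarith
  have hs1 : (1 : ℝ) ≤ Real.sqrt x := by
    have := Real.sqrt_le_sqrt hx1
    rwa [Real.sqrt_one] at this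
  have hlx : Real.log x = 2 * Real.log (Real.sqrt x) := by
    rw [Real.log_sqrt hx0.le]; ring
  have hlogs : (0:ℝ) < Real.log (Real.sqrt x) := by nlinarith
  -- sqrt bound
  have hA : ((Nat.sqrt (2 * M) : ℕ) : ℝ) + 1 ≤ 3 * Real.sqrt x := by
    have step1 : ((Nat.sqrt (2 * M) : ℕ) : ℝ) ≤ Real.sqrt ((2 * M : ℕ) : ℝ) :=
      Real.nat_sqrt_le_real_sqrt
    have step2 : ((2 * M : ℕ) : ℝ) = 2 * x := by push_cast; ring
    have step3 : Real.sqrt (2 * x) ≤ Real.sqrt (4 * x) :=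
      Real.sqrt_le_sqrt (by linarith)
    have step4 : Real.sqrt (4 * x) = 2 * Real.sqrt x := by
      rw [Real.sqrt_mul (by norm_num : (0:ℝ) ≤ 4) x,
        show (4 : ℝ) = 2 ^ 2 by norm_num, Real.sqrt_sq (by norm_num : (0:ℝ) ≤ 2)]
    rw [step2] at step1
    linarith
  -- log bound
  have hL : ((Nat.log 2 M : ℕ) : ℝ) + 1 ≤ 3 * Real.log x := by
    have n1 : ((Nat.log 2 M : ℕ) : ℝ) ≤ Real.logb 2 x := by
      have := Real.natLog_le_logb M 2
      simpa using this
    have n2 : Real.logb 2 x = Real.log x / Real.log 2 := by rw [Real.logb]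
    have hl2 : (0.6931471803 : ℝ) < Real.log 2 := Real.log_two_gt_d9
    have n3 : Real.log x / Real.log 2 ≤ 2 * Real.log x := by
      rw [div_le_iff₀ (by linarith)]
      nlinarith
    linarith
  have key : (((Nat.log 2 M : ℕ) : ℝ) + 1) ^ (k - 1) ≤
      6 ^ (k - 1) * Real.log (Real.sqrt x) ^ (k - 1) := by
    calc (((Nat.log 2 M : ℕ) : ℝ) + 1) ^ (k - 1)
        ≤ (3 * Real.log x) ^ (k - 1) := pow_le_pow_left₀ (by positivity) hL _
      _ = (6 * Real.log (Real.sqrt x)) ^ (k - 1) := by rw [hlx]; ring_nf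
      _ = 6 ^ (k - 1) * Real.log (Real.sqrt x) ^ (k - 1) := mul_pow _ _ _
  have hnum : ((k * ((Nat.sqrt (2 * M) + 1) * (Nat.log 2 M + 1) ^ (k - 1)) : ℕ) : ℝ) ≤
      (k : ℝ) * ((3 * Real.sqrt x) * (6 ^ (k - 1) * Real.log (Real.sqrt x) ^ (k - 1))) := by
    push_cast
    have h1 : (0:ℝ) ≤ (k : ℝ) := by positivity
    apply mul_le_mul_of_nonneg_left _ h1
    apply mul_le_mul hA key (by positivity) (by positivity)
  calc ((k * ((Nat.sqrt (2 * M) + 1) * (Nat.log 2 M + 1) ^ (k - 1)) : ℕ) : ℝ) / M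
      ≤ (k : ℝ) * ((3 * Real.sqrt x) * (6 ^ (k - 1) * Real.log (Real.sqrt x) ^ (k - 1))) / x := by
        rw [← hxdef]; gcongr
    _ = (3 * k * 6 ^ (k - 1)) * Real.log (Real.sqrt x) ^ (k - 1) * (Real.sqrt x / x) := by
        ring
    _ = (3 * k * 6 ^ (k - 1)) * (Real.log (Real.sqrt x) ^ (k - 1) / Real.sqrt x) := by
        rw [Real.sqrt_div_self']; ring

lemma sqrt_nat_tendsto : Tendsto (fun M : ℕ => Real.sqrt (M : ℝ)) atTop atTop := by
  have h1 : Tendsto (fun x : ℝ => x ^ ((1:ℝ)/2)) atTop atTop := tendsto_rpow_atTop (by norm_num)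
  have h2 := h1.comp (tendsto_natCast_atTop_atTop (R := ℝ))
  apply h2.congr
  intro M
  simp only [Function.comp_apply]
  rw [Real.sqrt_eq_rpow]

lemma sporadic_div_tendsto (k : ℕ) :
    Tendsto (fun M : ℕ =>
        ((k * ((Nat.sqrt (2 * M) + 1) * (Nat.log 2 M + 1) ^ (k - 1)) : ℕ) : ℝ) / M)
      atTop (nhds 0) := by
  have base : Tendsto (fun M : ℕ =>
      Real.log (Real.sqrt (M : ℝ)) ^ (k - 1) / Real.sqrt (M : ℝ)) atTop (nhds 0) := by
    have h := (Real.tendsto_pow_log_div_mul_add_atTop 1 0 (k - 1) one_ne_zero).comp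
      sqrt_nat_tendsto
    apply h.congr
    intro M
    simp [Function.comp_apply]
  have final0 : Tendsto (fun M : ℕ => (3 * (k:ℝ) * 6 ^ (k - 1)) *
      (Real.log (Real.sqrt (M : ℝ)) ^ (k - 1) / Real.sqrt (M : ℝ))) atTop (nhds 0) := by
    have := base.const_mul (3 * (k:ℝ) * 6 ^ (k - 1))
    simpa using this
  apply tendsto_of_tendsto_of_tendsto_of_le_of_le' tendsto_const_nhds final0
  · filter_upwards [eventually_ge_atTop 1] with M hM
    positivity
  · filter_upwards [eventually_ge_atTop 3] with M hM
    have hlog : 1 ≤ Real.log M := by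
      rw [Real.le_log_iff_exp_le (by positivity)]
      have h1 := Real.exp_one_lt_d9
      have h2 : (3:ℝ) ≤ (M:ℝ) := by exact_mod_cast hM
      linarith
    exact pointwise_bound k M hM hlog


end AvgNkAux

open AvgNkAux Filter Finset in
theorem average_order_Nk (k : ℕ) (hk : 2 ≤ k) :
    Filter.Tendsto (fun M : ℕ => (∑ a ∈ Finset.Icc 3 M, (Nk k a : ℝ)) / M)
      Filter.atTop (nhds ((k : ℝ) * ((k : ℝ) - 1))) := by
  have hk0 : 0 < k := by omega
  set P : ℝ := (k : ℝ) * ((k : ℝ) - 1) with hP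
  have hPkk : P = (k : ℝ) * (k : ℝ) - (k : ℝ) := by rw [hP]; ring
  have hcast : ∀ M : ℕ, ((k * k - k : ℕ) : ℝ) = P := by
    intro M
    rw [Nat.cast_sub (Nat.le_mul_of_pos_left k hk0), hPkk]
    push_cast; ring
  -- limit of the main term
  have hmain : Tendsto (fun M : ℕ => P * ((M : ℝ) - 2) / M) atTop (nhds P) := by
    have h2 : Tendsto (fun M : ℕ => P - 2 * P / (M : ℝ)) atTop (nhds (P - 0)) := by
      have := (tendsto_const_div_atTop_nhds_zero_nat (2 * P))
      exact tendsto_const_nhds.sub this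
    rw [show P - 0 = P by ring] at h2
    apply h2.congr'
    filter_upwards [eventually_ge_atTop 1] with M hM
    have hM0 : (M : ℝ) ≠ 0 := by positivity
    field_simp
  have hC := sporadic_div_tendsto k
  -- upper function
  have hupper : Tendsto (fun M : ℕ => P * ((M : ℝ) - 2) / M +
      ((k * ((Nat.sqrt (2 * M) + 1) * (Nat.log 2 M + 1) ^ (k - 1)) : ℕ) : ℝ) / M)
      atTop (nhds P) := by
    have := hmain.add hC
    simpa using this
  apply tendsto_of_tendsto_of_tendsto_of_le_of_le' hmain hupper
  · -- lower bound
    filter_upwards [eventually_ge_atTop 3] with M hM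
    have hl := S_lower (k := k) (M := M) hk0 hM
    have hl' : (((M - 2) * (k * k - k) : ℕ) : ℝ) ≤ ((∑ a ∈ Finset.Icc 3 M, Nk k a : ℕ) : ℝ) :=
      Nat.cast_le.mpr hl
    have e1 : (((M - 2) * (k * k - k) : ℕ) : ℝ) = ((M : ℝ) - 2) * P := by
      rw [Nat.cast_mul, Nat.cast_sub (by omega : 2 ≤ M), hcast M]
      push_cast; ring
    have e2 : ((∑ a ∈ Finset.Icc 3 M, Nk k a : ℕ) : ℝ) = ∑ a ∈ Finset.Icc 3 M, (Nk k a : ℝ) := by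
      push_cast; rfl
    rw [e1, e2] at hl'
    have hM0 : (0:ℝ) < (M : ℝ) := by positivity
    gcongr
    linarith
  · -- upper bound
    filter_upwards [eventually_ge_atTop 3] with M hM
    have hu := S_upper (k := k) (M := M) hk0 hM
    have hu' := (Nat.cast_le (α := ℝ)).mpr hu
    have e1 : (((M - 2) * (k * k - k) +
        k * ((Nat.sqrt (2 * M) + 1) * (Nat.log 2 M + 1) ^ (k - 1)) : ℕ) : ℝ)
        = ((M : ℝ) - 2) * P +
          ((k * ((Nat.sqrt (2 * M) + 1) * (Nat.log 2 M + 1) ^ (k - 1)) : ℕ) : ℝ) := by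
      rw [Nat.cast_add, Nat.cast_mul, Nat.cast_sub (by omega : 2 ≤ M), hcast M]
      push_cast; ring
    have e2 : ((∑ a ∈ Finset.Icc 3 M, Nk k a : ℕ) : ℝ) = ∑ a ∈ Finset.Icc 3 M, (Nk k a : ℝ) := by
      push_cast; rfl
    rw [e1, e2] at hu'
    have hM0 : (0:ℝ) < (M : ℝ) := by positivity
    rw [← add_div]
    gcongr
    linarith
end

section
/- For every fixed integer k ≥ 2 there is a constant C > 0 such that for all M ≥ 3, |Σ_{2 ≤ a ≤ M} N_k(a) − (C(k,2) + k(k-1)(M-2))| ≤ C · M^{1/2} · (log M)^{k-1}, where C(k,2) = k(k-1)/2 is the binomial coefficient. -/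
open Finset

lemma two_pow_le_choose : ∀ (p n : ℕ), 2 * p ≤ n → 2 ^ p ≤ n.choose p := by
  intro p
  induction p with
  | zero => simp
  | succ q ih =>
    intro n hn
    obtain ⟨m, rfl⟩ : ∃ m, n = m + 1 := ⟨n - 1, by omega⟩
    have h1 : (m + 1) * m.choose q = (m + 1).choose (q + 1) * (q + 1) :=
      Nat.add_one_mul_choose_eq m q
    have h2 : 2 ^ q ≤ m.choose q := ih m (by omega)
    have h3 : 2 ^ (q + 1) * (q + 1) ≤ (m + 1).choose (q + 1) * (q + 1) := by
      calc 2 ^ (q + 1) * (q + 1) = 2 ^ q * (2 * (q + 1)) := by ring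
      _ ≤ m.choose q * (m + 1) := Nat.mul_le_mul h2 (by omega)
      _ = (m + 1) * m.choose q := by ring
      _ = _ := h1
    exact Nat.le_of_mul_le_mul_right h3 (by omega)

lemma le_choose' : ∀ (n : ℕ) {p : ℕ}, 1 ≤ p → p < n → n ≤ n.choose p := by
  intro n
  induction n with
  | zero => omega
  | succ m ih =>
    intro p h1 h2
    rcases eq_or_lt_of_le (Nat.lt_succ_iff.mp h2) with h | h
    · subst h
      simp [Nat.choose_succ_self_right]
    · obtain ⟨q, rfl⟩ : ∃ q, p = q + 1 := ⟨p - 1, by omega⟩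
      rw [Nat.choose_succ_succ m q]
      have hq : 1 ≤ m.choose q := Nat.choose_pos (by omega)
      have := ih h1 h
      simp only [Nat.succ_eq_add_one] at this ⊢
      omega

lemma choose_two_le' : ∀ (n : ℕ) {p : ℕ}, 2 ≤ p → p + 2 ≤ n → n.choose 2 ≤ n.choose p := by
  intro n
  induction n with
  | zero => omega
  | succ m ih =>
    intro p h1 h2
    rcases eq_or_lt_of_le h2 with h | h
    · have : p = (m + 1) - 2 := by omega
      rw [this, Nat.choose_symm (by omega)]
    · have hpm : p + 2 ≤ m := by omega
      obtain ⟨q, rfl⟩ : ∃ q, p = q + 1 := ⟨p - 1, by omega⟩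
      rw [Nat.choose_succ_succ m q, show (2:ℕ) = 1 + 1 from rfl, Nat.choose_succ_succ m 1]
      have ha : m.choose 1 ≤ m.choose q := by
        rw [Nat.choose_one_right]
        exact le_choose' m (by omega) (by omega)
      have hb : m.choose 2 ≤ m.choose (q + 1) := ih h1 (by omega)
      have : m.choose 1 + m.choose 2 ≤ m.choose q + m.choose (q+1) := Nat.add_le_add ha hb
      simpa using this

lemma two_mul_choose_two (n : ℕ) : 2 * n.choose 2 = n * (n - 1) := by
  rcases n with _ | m
  · simp
  · rw [Nat.choose_two_right]
    have h : 2 ∣ (m + 1) * m := by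
      rcases Nat.even_or_odd m with h | h
      · exact Dvd.dvd.mul_left h.two_dvd _
      · exact Dvd.dvd.mul_right (Odd.add_one h).two_dvd _
    rw [Nat.add_sub_cancel, Nat.mul_div_cancel' h]


lemma mult_extend {α : Type*} [DecidableEq α] {s u : Finset α} {m : α → ℕ}
    (hsu : s ⊆ u) (h : ∀ x ∈ u, x ∉ s → m x = 0) :
    Nat.multinomial u m = Nat.multinomial s m := by
  unfold Nat.multinomial
  rw [← Finset.sum_subset hsu h, ← Finset.prod_subset hsu (fun x hx hxs => by
    rw [h x hx hxs]; rfl)]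

lemma mult_decomp {k : ℕ} (m : Fin k → ℕ) (i : Fin k) :
    Nat.multinomial Finset.univ m
      = (∑ j, m j).choose (m i) * Nat.multinomial (Finset.univ.erase i) m := by
  conv_lhs => rw [← Finset.insert_erase (Finset.mem_univ i)]
  rw [Nat.multinomial_insert (Finset.notMem_erase i _)]
  rw [Finset.add_sum_erase _ m (Finset.mem_univ i)]

lemma choose_le_mult {k : ℕ} (m : Fin k → ℕ) (i : Fin k) :
    (∑ j, m j).choose (m i) ≤ Nat.multinomial Finset.univ m := by
  rw [mult_decomp m i]
  exact Nat.le_mul_of_pos_right _ (Nat.multinomial_pos _ _)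

lemma choose_mul_le_mult {k : ℕ} (m : Fin k → ℕ) {i j : Fin k} (hij : i ≠ j) :
    (∑ x, m x).choose (m i) * ((∑ x, m x) - m i).choose (m j)
      ≤ Nat.multinomial Finset.univ m := by
  rw [mult_decomp m i]
  have hj : j ∈ Finset.univ.erase i := Finset.mem_erase.mpr ⟨hij.symm, Finset.mem_univ j⟩
  have hsum : ∑ x ∈ Finset.univ.erase i, m x = (∑ x, m x) - m i := by
    have := Finset.add_sum_erase Finset.univ m (Finset.mem_univ i)
    omega
  have hdec : Nat.multinomial (Finset.univ.erase i) m
      = ((∑ x, m x) - m i).choose (m j) * Nat.multinomial ((Finset.univ.erase i).erase j) m := by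
    conv_lhs => rw [← Finset.insert_erase hj]
    rw [Nat.multinomial_insert (Finset.notMem_erase j _)]
    rw [Finset.add_sum_erase _ m hj, hsum]
  rw [hdec, ← mul_assoc]
  exact Nat.le_mul_of_pos_right _ (Nat.multinomial_pos _ _)

lemma exists_two_nonzero {k : ℕ} {m : Fin k → ℕ} (h : 2 ≤ Nat.multinomial Finset.univ m) :
    ∃ i j : Fin k, i ≠ j ∧ m i ≠ 0 ∧ m j ≠ 0 := by
  by_contra hc
  push_neg at hc
  have h1 : Nat.multinomial Finset.univ m = 1 := by
    by_cases hz : ∃ i, m i ≠ 0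
    · obtain ⟨i, hi⟩ := hz
      have : Nat.multinomial Finset.univ m = Nat.multinomial {i} m := by
        apply mult_extend (by simp)
        intro x _ hx
        simp only [Finset.mem_singleton] at hx
        exact hc i x (fun h' => hx h'.symm) hi
      rw [this, Nat.multinomial_singleton]
    · push_neg at hz
      have : Nat.multinomial Finset.univ m = Nat.multinomial ∅ m := by
        apply mult_extend (Finset.empty_subset _)
        intro x _ _; exact hz x
      rw [this, Nat.multinomial_empty]
  omega

lemma pair_sum_le {k : ℕ} (m : Fin k → ℕ) {i j : Fin k} (hij : i ≠ j) :
    m i + m j ≤ ∑ x, m x := by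
  have : ∑ x ∈ ({i, j} : Finset (Fin k)), m x ≤ ∑ x, m x :=
    Finset.sum_le_sum_of_subset (Finset.subset_univ _)
  rwa [Finset.sum_pair hij] at this

lemma sum_le_mult {k : ℕ} {m : Fin k → ℕ} (h : 2 ≤ Nat.multinomial Finset.univ m) :
    ∑ x, m x ≤ Nat.multinomial Finset.univ m := by
  obtain ⟨i, j, hij, hi, hj⟩ := exists_two_nonzero h
  have hp := pair_sum_le m hij
  calc ∑ x, m x ≤ (∑ x, m x).choose (m i) :=
        le_choose' _ (by omega) (by omega)
    _ ≤ _ := choose_le_mult m i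


/-- the tuple with value 1 at `i`, `t` at `j`, `0` elsewhere. -/
def eTup {k : ℕ} (i j : Fin k) (t : ℕ) : Fin k → ℕ :=
  fun x => if x = i then 1 else if x = j then t else 0

lemma eTup_mult {k : ℕ} {i j : Fin k} (hij : i ≠ j) (t : ℕ) :
    Nat.multinomial Finset.univ (eTup i j t) = t + 1 := by
  have h1 : Nat.multinomial Finset.univ (eTup i j t) = Nat.multinomial {i, j} (eTup i j t) := by
    apply mult_extend (Finset.subset_univ _)
    intro x _ hx
    simp only [Finset.mem_insert, Finset.mem_singleton, not_or] at hx
    simp [eTup, hx.1, hx.2]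
  have e1 : eTup i j t i = 1 := by simp [eTup]
  have e2 : eTup i j t j = t := by
    unfold eTup; rw [if_neg (Ne.symm hij), if_pos rfl]
  rw [h1, Nat.binomial_eq_choose hij, e1, e2, Nat.choose_one_right]
  omega

lemma eTup_sum {k : ℕ} {i j : Fin k} (hij : i ≠ j) (t : ℕ) :
    ∑ x, eTup i j t x = t + 1 := by
  rw [← Finset.sum_subset (Finset.subset_univ ({i, j} : Finset (Fin k)))
    (fun x _ hx => by
      simp only [Finset.mem_insert, Finset.mem_singleton, not_or] at hx
      simp [eTup, hx.1, hx.2])]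
  rw [Finset.sum_pair hij]
  have e1 : eTup i j t i = 1 := by simp [eTup]
  have e2 : eTup i j t j = t := by
    unfold eTup; rw [if_neg (Ne.symm hij), if_pos rfl]
  omega

lemma eTup_inj {k : ℕ} {i j i' j' : Fin k} {t t' : ℕ} (hij : i ≠ j) (hij' : i' ≠ j')
    (ht : 2 ≤ t) (ht' : 2 ≤ t') (h : eTup i j t = eTup i' j' t') :
    i = i' ∧ j = j' ∧ t = t' := by
  have hA : i' = i := by
    have hi' := congrFun h i'
    have hr : eTup i' j' t' i' = 1 := by simp [eTup]
    rw [hr] at hi'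
    by_contra hne
    unfold eTup at hi'
    rw [if_neg hne] at hi'
    by_cases h2 : i' = j
    · rw [if_pos h2] at hi'; omega
    · rw [if_neg h2] at hi'; omega
  have hB : j' = j := by
    have hj' := congrFun h j'
    have hr : eTup i' j' t' j' = t' := by
      unfold eTup
      rw [if_neg (Ne.symm hij'), if_pos rfl]
    rw [hr] at hj'
    have hji : j' ≠ i := by
      intro hc
      exact hij' (by rw [hA, hc])
    unfold eTup at hj'
    rw [if_neg hji] at hj'
    by_cases h2 : j' = j
    · exact h2
    · rw [if_neg h2] at hj'; omega
  rw [hA, hB] at h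
  have hj2 := congrFun h j
  unfold eTup at hj2
  rw [if_neg (Ne.symm hij), if_pos rfl, if_neg (Ne.symm hij), if_pos rfl] at hj2
  exact ⟨hA.symm, hB.symm, hj2⟩

theorem sum_Nk_asymptotic (k : ℕ) (hk : 2 ≤ k) :
    ∃ C : ℝ, 0 < C ∧ ∀ M : ℕ, 3 ≤ M →
      |(∑ a ∈ Finset.Icc 2 M, (Nk k a : ℝ)) -
          ((k.choose 2 : ℝ) + (k : ℝ) * ((k : ℝ) - 1) * ((M : ℝ) - 2))| ≤
        C * Real.sqrt M * (Real.log M) ^ (k - 1) := by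
  classical
  have hkR : (0:ℝ) < k := by exact_mod_cast Nat.lt_of_lt_of_le Nat.zero_lt_two hk
  refine ⟨3 ^ k * k, by positivity, ?_⟩
  intro M hM
  have hM0 : M ≠ 0 := by omega
  -- ambient finset of all tuples with multinomial in [2, M]
  set Tf : Finset (Fin k → ℕ) :=
    (Fintype.piFinset (fun _ : Fin k => Finset.range (M+1))).filter
      (fun m => 2 ≤ Nat.multinomial Finset.univ m ∧ Nat.multinomial Finset.univ m ≤ M)
    with hTfdef
  have mem_Tf : ∀ m : Fin k → ℕ,
      m ∈ Tf ↔ (2 ≤ Nat.multinomial Finset.univ m ∧ Nat.multinomial Finset.univ m ≤ M) := by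
    intro m
    constructor
    · intro h; exact (Finset.mem_filter.mp h).2
    · intro h
      rw [hTfdef, Finset.mem_filter]
      refine ⟨?_, h⟩
      rw [Fintype.mem_piFinset]
      intro i
      rw [Finset.mem_range]
      have h1 : m i ≤ ∑ x, m x :=
        Finset.single_le_sum (fun x _ => Nat.zero_le (m x)) (Finset.mem_univ i)
      have h2 := sum_le_mult h.1
      omega
  -- step 1 : the sum of Nk equals the cardinality of Tf
  have step1 : ∑ a ∈ Finset.Icc 2 M, Nk k a = Tf.card := by
    have hfib : ∀ a ∈ Finset.Icc 2 M,
        Nk k a = (Tf.filter (fun m => Nat.multinomial Finset.univ m = a)).card := by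
      intro a ha
      rw [Finset.mem_Icc] at ha
      have hset : {m : Fin k → ℕ | Nat.multinomial Finset.univ m = a}
          = ↑(Tf.filter (fun m => Nat.multinomial Finset.univ m = a)) := by
        ext m
        simp only [Set.mem_setOf_eq, Finset.coe_filter, Set.mem_setOf_eq]
        constructor
        · intro hma
          exact ⟨(mem_Tf m).mpr ⟨by omega, by omega⟩, hma⟩
        · exact fun h => h.2
      rw [Nk, hset, Set.ncard_coe_finset]
    rw [Finset.sum_congr rfl hfib]
    exact (Finset.card_eq_sum_card_fiberwise (fun m hm => Finset.mem_Icc.mpr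
      ⟨((mem_Tf m).mp hm).1, ((mem_Tf m).mp hm).2⟩)).symm
  -- the indicator tuple of a 2-element set
  set ind : Finset (Fin k) → (Fin k → ℕ) := fun s => fun x => if x ∈ s then 1 else 0
    with hinddef
  have ind_eq : ∀ {i j : Fin k}, i ≠ j → ind {i, j} = eTup i j 1 := by
    intro i j hij
    funext x
    simp only [hinddef, eTup, Finset.mem_insert, Finset.mem_singleton]
    by_cases h1 : x = i
    · simp [h1]
    · by_cases h2 : x = j <;> simp [h1, h2]
  set A2 : Finset (Fin k → ℕ) :=
    ((Finset.univ : Finset (Fin k)).powersetCard 2).image ind with hA2def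
  set A3 : Finset (Fin k → ℕ) :=
    ((Finset.univ : Finset (Fin k)).offDiag ×ˢ Finset.Icc 2 (M-1)).image
      (fun p => eTup p.1.1 p.1.2 p.2) with hA3def
  -- multinomial values on A2 and A3
  have multA2 : ∀ m ∈ A2, Nat.multinomial Finset.univ m = 2 := by
    intro m hm
    rw [hA2def, Finset.mem_image] at hm
    obtain ⟨s, hs, rfl⟩ := hm
    rw [Finset.mem_powersetCard] at hs
    obtain ⟨i, j, hij, rfl⟩ := Finset.card_eq_two.mp hs.2
    rw [ind_eq hij, eTup_mult hij]
  have multA3 : ∀ m ∈ A3, 3 ≤ Nat.multinomial Finset.univ m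
      ∧ Nat.multinomial Finset.univ m ≤ M := by
    intro m hm
    rw [hA3def, Finset.mem_image] at hm
    obtain ⟨p, hp, rfl⟩ := hm
    rw [Finset.mem_product, Finset.mem_offDiag, Finset.mem_Icc] at hp
    rw [eTup_mult hp.1.2.2]
    omega
  have hA2T : A2 ⊆ Tf := by
    intro m hm
    rw [mem_Tf]
    rw [multA2 m hm]
    omega
  have hA3T : A3 ⊆ Tf := by
    intro m hm
    rw [mem_Tf]
    have := multA3 m hm
    omega
  have hdisj : Disjoint A2 A3 := by
    rw [Finset.disjoint_left]
    intro m h2 h3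
    have := multA2 m h2
    have := multA3 m h3
    omega
  -- cardinalities
  have cardA2 : A2.card = k.choose 2 := by
    rw [hA2def, Finset.card_image_of_injOn, Finset.card_powersetCard, Finset.card_univ,
      Fintype.card_fin]
    intro s _ s' _ h
    ext x
    have hx := congrFun h x
    simp only [hinddef] at hx
    by_cases h1 : x ∈ s <;> by_cases h2 : x ∈ s' <;> simp [h1, h2] at hx ⊢
  have cardA3 : A3.card = (k * k - k) * (M - 2) := by
    rw [hA3def, Finset.card_image_of_injOn, Finset.card_product, Finset.offDiag_card,
      Finset.card_univ, Fintype.card_fin, Nat.card_Icc]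
    · have h12 : M - 1 + 1 - 2 = M - 2 := by omega
      rw [h12]
    · intro p hp q hq h
      rw [Finset.mem_coe, Finset.mem_product, Finset.mem_offDiag, Finset.mem_Icc] at hp hq
      obtain ⟨h1, h2, h3⟩ := eTup_inj hp.1.2.2 hq.1.2.2 hp.2.1 hq.2.1 h
      exact Prod.ext (Prod.ext h1 h2) h3
  -- tuples of "main form" are in A2 ∪ A3
  have main_mem : ∀ m : Fin k → ℕ, m ∈ Tf → ∀ i j : Fin k, i ≠ j → m i = 1 →
      (∀ x, x ≠ i → x ≠ j → m x = 0) → m ∈ A2 ∪ A3 := by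
    intro m hmT i j hij hmi hzero
    have h2M := (mem_Tf m).mp hmT
    have hmeq : m = eTup i j (m j) := by
      funext x
      unfold eTup
      by_cases h1 : x = i
      · rw [if_pos h1, h1, hmi]
      · by_cases h2 : x = j
        · rw [if_neg h1, if_pos h2, h2]
        · rw [if_neg h1, if_neg h2]
          exact hzero x h1 h2
    have hmultm : Nat.multinomial Finset.univ m = m j + 1 := by
      conv_lhs => rw [hmeq]
      exact eTup_mult hij (m j)
    rcases Nat.lt_or_ge (m j) 2 with ht | ht
    · -- m j = 0 impossible, m j = 1 gives A2
      interval_cases h : m j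
      · omega
      · apply Finset.mem_union_left
        rw [hA2def, Finset.mem_image]
        refine ⟨{i, j}, ?_, ?_⟩
        · rw [Finset.mem_powersetCard]
          exact ⟨Finset.subset_univ _, Finset.card_pair hij⟩
        · rw [ind_eq hij, ← hmeq]
    · -- m j ≥ 2 gives A3
      apply Finset.mem_union_right
      rw [hA3def, Finset.mem_image]
      refine ⟨((i, j), m j), ?_, hmeq.symm⟩
      rw [Finset.mem_product, Finset.mem_offDiag, Finset.mem_Icc]
      refine ⟨⟨Finset.mem_univ _, Finset.mem_univ _, hij⟩, ht, ?_⟩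
      omega
  -- the bad set
  set B : Finset (Fin k → ℕ) := Tf \ (A2 ∪ A3) with hBdef
  have hUsub : A2 ∪ A3 ⊆ Tf := Finset.union_subset hA2T hA3T
  have cardT : Tf.card = k.choose 2 + (k * k - k) * (M - 2) + B.card := by
    have h1 := Finset.card_sdiff_add_card_eq_card hUsub
    have h2 : (A2 ∪ A3).card = A2.card + A3.card := Finset.card_union_of_disjoint hdisj
    rw [← hBdef] at h1
    omega
  -- every tuple in B has small sum
  have claimA : ∀ m ∈ B, 2 ≤ ∑ x, m x ∧ (∑ x, m x) * ((∑ x, m x) - 1) ≤ 2 * M := by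
    intro m hmB
    rw [hBdef, Finset.mem_sdiff, Finset.mem_union] at hmB
    obtain ⟨hmT, hmA⟩ := hmB
    have h2M := (mem_Tf m).mp hmT
    obtain ⟨i, j, hij, hi, hj⟩ := exists_two_nonzero h2M.1
    have hpair := pair_sum_le m hij
    refine ⟨by omega, ?_⟩
    set S : Finset (Fin k) := Finset.univ.filter (fun x => m x ≠ 0) with hSdef
    have hmemS : ∀ x : Fin k, x ∈ S ↔ m x ≠ 0 := by
      intro x
      rw [hSdef, Finset.mem_filter]
      simp
    have hpairS : ({i, j} : Finset (Fin k)) ⊆ S := by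
      intro x hx
      rw [Finset.mem_insert, Finset.mem_singleton] at hx
      rw [hmemS]
      rcases hx with rfl | rfl <;> assumption
    have hcard2 : 2 ≤ S.card := by
      have := Finset.card_le_card hpairS
      rwa [Finset.card_pair hij] at this
    rcases eq_or_lt_of_le hcard2 with hc2 | hc3
    · -- exactly two nonzero coordinates
      have hSeq : ({i, j} : Finset (Fin k)) = S :=
        Finset.eq_of_subset_of_card_le hpairS (by rw [Finset.card_pair hij]; omega)
      have hzero : ∀ x : Fin k, x ≠ i → x ≠ j → m x = 0 := by
        intro x hxi hxj
        by_contra hmx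
        have : x ∈ S := (hmemS x).mpr hmx
        rw [← hSeq, Finset.mem_insert, Finset.mem_singleton] at this
        tauto
      have hzero' : ∀ x : Fin k, x ≠ j → x ≠ i → m x = 0 := fun x h1 h2 => hzero x h2 h1
      have hi2 : 2 ≤ m i := by
        rcases Nat.lt_or_ge (m i) 2 with h | h
        · exfalso
          have hmi1 : m i = 1 := by omega
          exact hmA (Finset.mem_union.mp (main_mem m hmT i j hij hmi1 hzero))
        · exact h
      have hj2 : 2 ≤ m j := by
        rcases Nat.lt_or_ge (m j) 2 with h | h
        · exfalso
          have hmj1 : m j = 1 := by omega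
          exact hmA (Finset.mem_union.mp (main_mem m hmT j i hij.symm hmj1 hzero'))
        · exact h
      have hsumeq : ∑ x, m x = m i + m j := by
        have h1 : ∑ x ∈ S, m x = ∑ x, m x := Finset.sum_filter_ne_zero Finset.univ
        rw [← h1, ← hSeq, Finset.sum_pair hij]
      have hch2 : (∑ x, m x).choose 2 ≤ (∑ x, m x).choose (m i) :=
        choose_two_le' _ hi2 (by omega)
      have hcm : (∑ x, m x).choose (m i) ≤ Nat.multinomial Finset.univ m :=
        choose_le_mult m i
      have h2c := two_mul_choose_two (∑ x, m x)
      omega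
    · -- at least three nonzero coordinates
      obtain ⟨a, b, c, ha, hb, hc, hab, hac, hbc⟩ := Finset.two_lt_card_iff.mp hc3
      rw [hmemS] at ha hb hc
      have key : ∀ x y z : Fin k, x ≠ y → x ≠ z → y ≠ z →
          m x ≠ 0 → m y ≠ 0 → m z ≠ 0 → m x ≤ m y → m x ≤ m z →
          (∑ w, m w) * ((∑ w, m w) - 1) ≤ 2 * M := by
        intro x y z hxy hxz hyz hx0 hy0 hz0 hxy' hxz'
        have hsum3 : m x + (m y + m z) ≤ ∑ w, m w := by
          have h1 : ∑ w ∈ ({x, y, z} : Finset (Fin k)), m w = m x + (m y + m z) := by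
            rw [Finset.sum_insert (by simp [hxy, hxz]), Finset.sum_pair hyz]
          have h2 : ∑ w ∈ ({x, y, z} : Finset (Fin k)), m w ≤ ∑ w, m w :=
            Finset.sum_le_sum_of_subset (Finset.subset_univ _)
          omega
        have hcm := choose_mul_le_mult m hxy
        have c1 : (∑ w, m w) ≤ (∑ w, m w).choose (m x) :=
          le_choose' _ (by omega) (by omega)
        have c2 : (∑ w, m w) - m x ≤ ((∑ w, m w) - m x).choose (m y) :=
          le_choose' _ (by omega) (by omega)
        have hnm : (∑ w, m w) * ((∑ w, m w) - m x) ≤ Nat.multinomial Finset.univ m :=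
          le_trans (Nat.mul_le_mul c1 c2) hcm
        have hhalf : (∑ w, m w) - 1 ≤ 2 * ((∑ w, m w) - m x) := by omega
        calc (∑ w, m w) * ((∑ w, m w) - 1)
            ≤ (∑ w, m w) * (2 * ((∑ w, m w) - m x)) := Nat.mul_le_mul_left _ hhalf
          _ = 2 * ((∑ w, m w) * ((∑ w, m w) - m x)) := by ring
          _ ≤ 2 * Nat.multinomial Finset.univ m := Nat.mul_le_mul_left _ hnm
          _ ≤ 2 * M := Nat.mul_le_mul_left _ h2M.2
      rcases le_total (m a) (m b) with h1 | h1 <;> rcases le_total (m b) (m c) with h2 | h2 <;>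
        rcases le_total (m a) (m c) with h3 | h3
      · exact key a b c hab hac hbc ha hb hc h1 h3
      · exact key a b c hab hac hbc ha hb hc h1 (by omega)
      · exact key a b c hab hac hbc ha hb hc h1 h3
      · exact key c a b hac.symm hbc.symm hab hc ha hb h3 h2
      · exact key b a c hab.symm hbc hac hb ha hc h1 h2
      · exact key b a c hab.symm hbc hac hb ha hc h1 h2
      · exact key c a b hac.symm hbc.symm hab hc ha hb (by omega) h2
      · exact key c a b hac.symm hbc.symm hab hc ha hb h3 h2
  -- small coordinates away from the maximum
  have claimC : ∀ m : Fin k → ℕ, m ∈ Tf → ∀ j i : Fin k, j ≠ i → m j ≤ m i →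
      m j ≤ Nat.log 2 M := by
    intro m hmT j i hji hle
    have h2M := (mem_Tf m).mp hmT
    have hpair := pair_sum_le m hji
    have h1 : 2 ^ (m j) ≤ (∑ x, m x).choose (m j) := two_pow_le_choose _ _ (by omega)
    have h2 : (∑ x, m x).choose (m j) ≤ Nat.multinomial Finset.univ m := choose_le_mult m j
    have h3 : 2 ^ (m j) ≤ M := by omega
    exact (Nat.le_log_iff_pow_le one_lt_two hM0).mpr h3
  -- choice of a coordinate achieving the maximum
  have hne : (Finset.univ : Finset (Fin k)).Nonempty := ⟨⟨0, by omega⟩, Finset.mem_univ _⟩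
  choose idx hidxmem hidx using fun m : Fin k → ℕ => Finset.exists_max_image Finset.univ m hne
  -- the injection bound
  set nb : ℕ := Nat.sqrt (4 * M) with hnbdef
  set L : ℕ := Nat.log 2 M with hLdef
  have cardB : B.card ≤ k * ((nb + 1) * (L + 1) ^ (k - 1)) := by
    set D : Fin k → Finset (Fin k → ℕ) := fun i0 =>
      Fintype.piFinset (fun j => if j = i0 then ({0} : Finset ℕ) else Finset.range (L+1))
      with hDdef
    set Tgt : Finset ((_ : Fin k) × (ℕ × (Fin k → ℕ))) :=
      Finset.univ.sigma (fun i0 => (Finset.range (nb+1)) ×ˢ D i0) with hTgtdef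
    have hmaps : ∀ m ∈ B, (⟨idx m, (∑ x, m x, fun j => if j = idx m then 0 else m j)⟩ :
        (_ : Fin k) × (ℕ × (Fin k → ℕ))) ∈ Tgt := by
      intro m hmB
      have hmT : m ∈ B → m ∈ Tf := fun h => (Finset.mem_sdiff.mp h).1
      have ⟨hn2, hnsq⟩ := claimA m hmB
      rw [hTgtdef, Finset.mem_sigma]
      refine ⟨Finset.mem_univ _, ?_⟩
      show ((∑ x, m x, fun j => if j = idx m then 0 else m j) : ℕ × (Fin k → ℕ))
        ∈ (Finset.range (nb+1)) ×ˢ D (idx m)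
      refine Finset.mem_product.mpr ⟨?_, ?_⟩
      · show (∑ x, m x) ∈ Finset.range (nb+1)
        rw [Finset.mem_range, Nat.lt_succ_iff, hnbdef, Nat.le_sqrt]
        have e1 : (∑ x, m x) * 1 ≤ (∑ x, m x) * ((∑ x, m x) - 1) :=
          Nat.mul_le_mul (le_refl _) (by omega)
        have e2 : (∑ x, m x) * ((∑ x, m x) - 1) = (∑ x, m x) * (∑ x, m x) - (∑ x, m x) := by
          rw [Nat.mul_sub_one]
        have e3 : (∑ x, m x) ≤ (∑ x, m x) * (∑ x, m x) :=
          Nat.le_mul_of_pos_left _ (by omega)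
        omega
      · show (fun j => if j = idx m then 0 else m j) ∈ D (idx m)
        rw [hDdef, Fintype.mem_piFinset]
        intro j
        by_cases hji : j = idx m
        · simp [hji]
        · rw [if_neg hji]
          simp only [if_neg hji, Finset.mem_range, Nat.lt_succ_iff]
          rw [hLdef]
          exact claimC m (hmT hmB) j (idx m) hji (hidx m j (Finset.mem_univ j))
    have hinj : Set.InjOn (fun m : Fin k → ℕ =>
        (⟨idx m, (∑ x, m x, fun j => if j = idx m then 0 else m j)⟩ :
          (_ : Fin k) × (ℕ × (Fin k → ℕ)))) ↑B := by
      intro m hm m' hm' heq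
      simp only [Sigma.mk.inj_iff, heq_iff_eq, Prod.mk.injEq] at heq
      obtain ⟨h1, h2, h3⟩ := heq
      have hoff : ∀ y : Fin k, y ≠ idx m → m y = m' y := by
        intro y hy
        have := congrFun h3 y
        rw [if_neg hy, if_neg (h1 ▸ hy)] at this
        exact this
      funext x
      by_cases hx : x = idx m
      · have e1 := Finset.add_sum_erase Finset.univ m (Finset.mem_univ (idx m))
        have e2 := Finset.add_sum_erase Finset.univ m' (Finset.mem_univ (idx m'))
        have e3 : ∑ y ∈ Finset.univ.erase (idx m), m y
            = ∑ y ∈ Finset.univ.erase (idx m), m' y :=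
          Finset.sum_congr rfl (fun y hy => hoff y (Finset.mem_erase.mp hy).1)
        rw [← h1] at e2
        rw [hx]
        omega
      · exact hoff x hx
    have hcardle := Finset.card_le_card_of_injOn _ hmaps hinj
    refine le_trans hcardle ?_
    rw [hTgtdef, Finset.card_sigma]
    have hD : ∀ i0 : Fin k, ((Finset.range (nb+1)) ×ˢ D i0).card = (nb+1) * (L+1)^(k-1) := by
      intro i0
      rw [Finset.card_product, Finset.card_range]
      congr 1
      rw [hDdef]
      rw [Fintype.card_piFinset]
      rw [← Finset.prod_erase_mul Finset.univ _ (Finset.mem_univ i0)]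
      have hlast : (if i0 = i0 then ({0} : Finset ℕ) else Finset.range (L+1)).card = 1 := by
        rw [if_pos rfl, Finset.card_singleton]
      rw [hlast, mul_one]
      have hstep : ∀ x ∈ Finset.univ.erase i0,
          (if x = i0 then ({0} : Finset ℕ) else Finset.range (L+1)).card = L + 1 := by
        intro x hx
        rw [if_neg (Finset.mem_erase.mp hx).1, Finset.card_range]
      rw [Finset.prod_congr rfl hstep, Finset.prod_const,
        Finset.card_erase_of_mem (Finset.mem_univ i0), Finset.card_univ, Fintype.card_fin]
    rw [Finset.sum_congr rfl (fun i0 _ => hD i0), Finset.sum_const, Finset.card_univ,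
      Fintype.card_fin, smul_eq_mul]
  -- real arithmetic
  have hsumcast : (∑ a ∈ Finset.Icc 2 M, (Nk k a : ℝ)) = (Tf.card : ℝ) := by
    rw [← Nat.cast_sum]
    exact_mod_cast congrArg (Nat.cast : ℕ → ℝ) step1
  have hmain : ((k.choose 2 + (k * k - k) * (M - 2) : ℕ) : ℝ)
      = (k.choose 2 : ℝ) + (k : ℝ) * ((k : ℝ) - 1) * ((M : ℝ) - 2) := by
    have hkk : k ≤ k * k := Nat.le_mul_of_pos_left k (by omega)
    push_cast [Nat.cast_sub hkk, Nat.cast_sub (show 2 ≤ M by omega)]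
    ring
  have habs : (∑ a ∈ Finset.Icc 2 M, (Nk k a : ℝ))
      - ((k.choose 2 : ℝ) + (k : ℝ) * ((k : ℝ) - 1) * ((M : ℝ) - 2)) = (B.card : ℝ) := by
    rw [hsumcast, ← hmain, cardT]
    push_cast
    ring
  rw [habs, abs_of_nonneg (by positivity : (0:ℝ) ≤ (B.card : ℝ))]
  -- numeric facts
  have hM3 : (3:ℝ) ≤ (M:ℝ) := by exact_mod_cast hM
  have hsqrt1 : (1:ℝ) ≤ Real.sqrt M := by
    rw [show (1:ℝ) = Real.sqrt 1 from Real.sqrt_one.symm]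
    exact Real.sqrt_le_sqrt (by linarith)
  have hlog1 : (1:ℝ) ≤ Real.log M := by
    rw [Real.le_log_iff_exp_le (by linarith : (0:ℝ) < (M:ℝ))]
    have := Real.exp_one_lt_d9
    linarith
  have hnbR : ((nb:ℝ) + 1) ≤ 3 * Real.sqrt M := by
    have h1 : (nb:ℝ) ≤ Real.sqrt (4 * (M:ℝ)) := by
      rw [Real.le_sqrt (Nat.cast_nonneg nb) (by positivity)]
      have h2 : nb * nb ≤ 4 * M := Nat.sqrt_le (4 * M)
      have h3 : ((nb * nb : ℕ) : ℝ) ≤ ((4 * M : ℕ) : ℝ) := by exact_mod_cast h2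
      push_cast at h3
      nlinarith
    have h4 : Real.sqrt (4 * (M:ℝ)) = 2 * Real.sqrt M := by
      rw [show (4:ℝ) * (M:ℝ) = (2:ℝ)^2 * (M:ℝ) by ring, Real.sqrt_mul (by positivity),
        Real.sqrt_sq (by norm_num)]
    rw [h4] at h1
    linarith
  have hLR : ((L:ℝ) + 1) ≤ 3 * Real.log M := by
    have h2L : (2:ℝ)^L ≤ (M:ℝ) := by
      have := Nat.pow_log_le_self 2 hM0
      rw [hLdef]
      exact_mod_cast this
    have hlog2 : (L:ℝ) * Real.log 2 ≤ Real.log M := by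
      have := Real.log_le_log (by positivity) h2L
      rwa [Real.log_pow] at this
    have hlt := Real.log_two_gt_d9
    have hL0 : (0:ℝ) ≤ (L:ℝ) := Nat.cast_nonneg L
    nlinarith
  calc (B.card : ℝ)
      ≤ (k:ℝ) * (((nb:ℝ) + 1) * ((L:ℝ) + 1) ^ (k-1)) := by exact_mod_cast cardB
    _ ≤ (k:ℝ) * ((3 * Real.sqrt M) * (3 * Real.log M) ^ (k-1)) := by
        apply mul_le_mul_of_nonneg_left ?_ (le_of_lt hkR)
        apply mul_le_mul hnbR (pow_le_pow_left₀ (by positivity) hLR _)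
          (by positivity) (by positivity)
    _ = 3^k * (k:ℝ) * Real.sqrt M * Real.log M ^ (k-1) := by
        rw [mul_pow]
        have h3k : (3:ℝ)^k = 3 * 3^(k-1) := by
          conv_lhs => rw [show k = (k-1)+1 by omega]
          rw [pow_succ]
          ring
        rw [h3k]
        ring
end

section
/- For every fixed integer k ≥ 2 there is a constant C > 0 such that N_k(a) ≤ C · (log a)^{k-1} for all integers a ≥ 3. -/
lemma two_pow_le_choose_two_mul (j : ℕ) : 2 ^ j ≤ (j + j).choose j := by
  induction j with
  | zero => simp
  | succ j ih =>
    have e : j + 1 + (j + 1) = (j + j + 1) + 1 := by ring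
    rw [e, Nat.choose_succ_succ]
    have h1 : (j + j).choose j ≤ (j + j + 1).choose j := Nat.choose_le_choose _ (by omega)
    have h2 : (j + j).choose j ≤ (j + j + 1).choose (j + 1) := by
      rw [Nat.choose_succ_succ]; omega
    have : 2 ^ (j + 1) = 2 ^ j + 2 ^ j := by ring
    simp only [Nat.succ_eq_add_one] at *
    omega

/-- The multinomial coefficient is strictly monotone in one coordinate provided some other
coordinate is positive. -/
lemma multinomial_update_strictMono {K : ℕ} (m : Fin K → ℕ) (j i : Fin K) (hij : i ≠ j)
    (hi : 0 < m i) :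
    StrictMono (fun t => Nat.multinomial Finset.univ (Function.update m j t)) := by
  apply strictMono_nat_of_lt_succ
  intro t
  set f := Function.update m j t with hf
  set g := Function.update m j (t + 1) with hg
  have hfj : f j = t := by simp [hf]
  have hgj : g j = t + 1 := by simp [hg]
  have hfg : ∀ x, x ≠ j → f x = g x := by
    intro x hx; simp [hf, hg, Function.update_of_ne hx]
  have hsum : ∑ x, g x = (∑ x, f x) + 1 := by
    rw [← Finset.add_sum_erase _ g (Finset.mem_univ j),
        ← Finset.add_sum_erase _ f (Finset.mem_univ j)]
    have he : ∑ x ∈ Finset.univ.erase j, g x = ∑ x ∈ Finset.univ.erase j, f x :=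
      Finset.sum_congr rfl fun x hx => (hfg x (Finset.mem_erase.mp hx).1).symm
    rw [he, hfj, hgj]; ring
  have hprod : ∏ x, (g x).factorial = (t + 1) * ∏ x, (f x).factorial := by
    rw [← Finset.mul_prod_erase _ (fun x => (g x).factorial) (Finset.mem_univ j),
        ← Finset.mul_prod_erase _ (fun x => (f x).factorial) (Finset.mem_univ j)]
    have he : ∏ x ∈ Finset.univ.erase j, (g x).factorial = ∏ x ∈ Finset.univ.erase j, (f x).factorial :=
      Finset.prod_congr rfl fun x hx => by rw [hfg x (Finset.mem_erase.mp hx).1]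
    rw [he, hfj, hgj, Nat.factorial_succ]; ring
  have s1 := Nat.multinomial_spec Finset.univ f
  have s2 := Nat.multinomial_spec Finset.univ g
  rw [hsum, hprod, Nat.factorial_succ, ← s1] at s2
  -- s2 : (t+1) * ∏ f! * M g = (∑f + 1) * (∏ f! * M f)
  have hpos : 0 < ∏ x, (f x).factorial := Finset.prod_pos fun x _ => Nat.factorial_pos _
  have key : (t + 1) * Nat.multinomial Finset.univ g
      = ((∑ x, f x) + 1) * Nat.multinomial Finset.univ f := by
    apply Nat.eq_of_mul_eq_mul_left hpos
    calc (∏ x, (f x).factorial) * ((t + 1) * Nat.multinomial Finset.univ g)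
        = (t + 1) * (∏ x, (f x).factorial) * Nat.multinomial Finset.univ g := by ring
      _ = ((∑ x, f x) + 1) * ((∏ x, (f x).factorial) * Nat.multinomial Finset.univ f) := s2
      _ = (∏ x, (f x).factorial) * (((∑ x, f x) + 1) * Nat.multinomial Finset.univ f) := by ring
  have hfi : f i = m i := Function.update_of_ne hij _ _
  have hsumge : t + 1 ≤ ∑ x, f x := by
    have h1 : ∑ x, f x = f j + ∑ x ∈ Finset.univ.erase j, f x :=
      (Finset.add_sum_erase _ f (Finset.mem_univ j)).symm
    have h2 : f i ≤ ∑ x ∈ Finset.univ.erase j, f x :=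
      Finset.single_le_sum (fun x _ => Nat.zero_le _) (Finset.mem_erase.mpr ⟨hij, Finset.mem_univ i⟩)
    omega
  have hMf : 0 < Nat.multinomial Finset.univ f := Nat.multinomial_pos _ _
  have : (t + 1) * Nat.multinomial Finset.univ f < (t + 1) * Nat.multinomial Finset.univ g := by
    nlinarith
  exact Nat.lt_of_mul_lt_mul_left this

/-- If all coordinates other than `j` vanish, the multinomial coefficient is 1. -/
lemma multinomial_eq_one_of {K : ℕ} (m : Fin K → ℕ) (j : Fin K) (h : ∀ x, x ≠ j → m x = 0) :
    Nat.multinomial Finset.univ m = 1 := by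
  have s1 := Nat.multinomial_spec Finset.univ m
  have hsum : ∑ x, m x = m j := by
    rw [← Finset.add_sum_erase _ m (Finset.mem_univ j)]
    have : ∑ x ∈ Finset.univ.erase j, m x = 0 :=
      Finset.sum_eq_zero fun x hx => h x (Finset.mem_erase.mp hx).1
    omega
  have hprod : ∏ x, (m x).factorial = (m j).factorial := by
    rw [← Finset.mul_prod_erase _ (fun x => (m x).factorial) (Finset.mem_univ j)]
    have : ∏ x ∈ Finset.univ.erase j, (m x).factorial = 1 :=
      Finset.prod_eq_one fun x hx => by rw [h x (Finset.mem_erase.mp hx).1, Nat.factorial_zero]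
    rw [this, mul_one]
  rw [hsum, hprod] at s1
  have := Nat.factorial_pos (m j)
  nlinarith

/-- In a tuple with multinomial value `a`, each binomial `choose (∑ m) (m i)` is at most `a`. -/
lemma choose_le_of_multinomial {K : ℕ} (m : Fin K → ℕ) (a : ℕ)
    (hm : Nat.multinomial Finset.univ m = a) (i : Fin K) :
    (∑ x, m x).choose (m i) ≤ a := by
  classical
  have h1 : (Finset.univ : Finset (Fin K)) = insert i (Finset.univ.erase i) := by
    rw [Finset.insert_erase (Finset.mem_univ i)]
  have h2 := Nat.multinomial_insert (Finset.notMem_erase i Finset.univ) m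
  rw [← h1] at h2
  have hsum : m i + ∑ x ∈ Finset.univ.erase i, m x = ∑ x, m x :=
    Finset.add_sum_erase _ m (Finset.mem_univ i)
  rw [hsum] at h2
  have hpos : 0 < Nat.multinomial (Finset.univ.erase i) m := Nat.multinomial_pos _ _
  calc (∑ x, m x).choose (m i) ≤ (∑ x, m x).choose (m i) * Nat.multinomial (Finset.univ.erase i) m :=
        Nat.le_mul_of_pos_right _ hpos
    _ = a := by rw [← h2, hm]

theorem Nk_log_bound (k : ℕ) (hk : 2 ≤ k) :
    ∃ C : ℝ, 0 < C ∧ ∀ a : ℕ, 3 ≤ a → (Nk k a : ℝ) ≤ C * (Real.log a) ^ (k - 1) := by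
  obtain ⟨n, rfl⟩ : ∃ n, k = n + 2 := ⟨k - 2, by omega⟩
  refine ⟨(n + 2) * 3 ^ (n + 1), by positivity, ?_⟩
  intro a ha
  set L := Nat.log 2 a with hL
  -- Step 1: the natural-number counting bound
  have hcount : Nk (n + 2) a ≤ (n + 2) * (L + 1) ^ (n + 1) := by
    classical
    set S := {m : Fin (n + 2) → ℕ | Nat.multinomial Finset.univ m = a} with hS
    -- choice of an argmax index
    have harg : ∀ m : Fin (n + 2) → ℕ, ∃ j, ∀ x, m x ≤ m j := Finite.exists_max
    let jf : (Fin (n + 2) → ℕ) → Fin (n + 2) := fun m => (harg m).choose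
    have hjf : ∀ m : Fin (n + 2) → ℕ, ∀ x, m x ≤ m (jf m) := fun (m : Fin (n + 2) → ℕ) => (harg m).choose_spec
    -- all non-argmax coordinates are ≤ L
    have hsmall : ∀ m ∈ S, ∀ x, x ≠ jf m → m x ≤ L := by
      intro m hm x hx
      have h2x : m x + m x ≤ ∑ y, m y := by
        have h1 : ∑ y, m y = m (jf m) + ∑ y ∈ Finset.univ.erase (jf m), m y :=
          (Finset.add_sum_erase _ m (Finset.mem_univ _)).symm
        have h2 : m x ≤ ∑ y ∈ Finset.univ.erase (jf m), m y :=
          Finset.single_le_sum (fun y _ => Nat.zero_le _)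
            (Finset.mem_erase.mpr ⟨hx, Finset.mem_univ x⟩)
        have := hjf m x
        omega
      have hc : 2 ^ (m x) ≤ a :=
        le_trans (le_trans (two_pow_le_choose_two_mul (m x))
          (Nat.choose_le_choose _ h2x)) (choose_le_of_multinomial m a hm x)
      exact (Nat.le_log_iff_pow_le (by norm_num) (by omega)).mpr hc
    -- the injection
    let φ : (Fin (n + 2) → ℕ) → Fin (n + 2) × (Fin (n + 1) → Fin (L + 1)) :=
      fun m => (jf m, fun i => ⟨min (m ((jf m).succAbove i)) L, by omega⟩)
    have hinj : Set.InjOn φ S := by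
      intro m hm m' hm' he
      have hj : jf m = jf m' := congrArg Prod.fst he
      set j := jf m with hjdef
      have heq : ∀ x, x ≠ j → m x = m' x := by
        intro x hx
        obtain ⟨z, hz⟩ := Fin.exists_succAbove_eq hx
        have h2 := congrFun (congrArg Prod.snd he) z
        have hv1 : min (m (j.succAbove z)) L = m (j.succAbove z) :=
          min_eq_left (hsmall m hm _ (by rw [hz]; exact hx))
        have hv2 : min (m' ((jf m').succAbove z)) L = m' ((jf m').succAbove z) :=
          min_eq_left (hsmall m' hm' _ (Fin.succAbove_ne _ _))
        have : min (m (j.succAbove z)) L = min (m' ((jf m').succAbove z)) L :=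
          congrArg Fin.val h2
        rw [hv1, hv2] at this
        rw [← hz, this, ← hj]
      -- some coordinate other than j is positive
      have hpos : ∃ x, x ≠ j ∧ 0 < m x := by
        by_contra hcon
        push_neg at hcon
        have h1 : Nat.multinomial Finset.univ m = 1 :=
          multinomial_eq_one_of m j fun x hx => by have := hcon x hx; omega
        have := hm
        rw [hS, Set.mem_setOf_eq] at this
        omega
      obtain ⟨x, hxj, hx⟩ := hpos
      have hsm := multinomial_update_strictMono m j x hxj hx
      have e1 : Function.update m j (m j) = m := Function.update_eq_self j m
      have e2 : Function.update m j (m' j) = m' := by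
        funext y
        by_cases hy : y = j
        · subst hy; simp
        · rw [Function.update_of_ne hy, heq y hy]
      have hval : (fun t => Nat.multinomial Finset.univ (Function.update m j t)) (m j)
          = (fun t => Nat.multinomial Finset.univ (Function.update m j t)) (m' j) := by
        simp only [e1, e2]
        have h1 : Nat.multinomial Finset.univ m = a := hm
        have h2 : Nat.multinomial Finset.univ m' = a := hm'
        rw [h1, h2]
      have : m j = m' j := hsm.injective hval
      funext y
      by_cases hy : y = j
      · subst hy; exact this
      · exact heq y hy
    have hmap : ∀ m ∈ S, φ m ∈ (Set.univ : Set (Fin (n + 2) × (Fin (n + 1) → Fin (L + 1)))) :=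
      fun _ _ => Set.mem_univ _
    have hle := Set.ncard_le_ncard_of_injOn φ hmap hinj (Set.finite_univ)
    rw [Set.ncard_univ] at hle
    calc Nk (n + 2) a = S.ncard := rfl
      _ ≤ Nat.card (Fin (n + 2) × (Fin (n + 1) → Fin (L + 1))) := hle
      _ = (n + 2) * (L + 1) ^ (n + 1) := by
          simp [Nat.card_eq_fintype_card, Fintype.card_fun]
  -- Step 2: pass to the reals
  have hlog1 : (1 : ℝ) ≤ Real.log a := by
    rw [← Real.log_exp 1]
    apply Real.log_le_log (Real.exp_pos 1)
    calc Real.exp 1 ≤ 2.7182818286 := Real.exp_one_lt_d9.le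
      _ ≤ (a : ℝ) := by
          have : (3 : ℝ) ≤ (a : ℝ) := by exact_mod_cast ha
          linarith
  have hLlog : (L : ℝ) ≤ 2 * Real.log a := by
    have h2L : (2 : ℝ) ^ L ≤ a := by
      have := Nat.pow_log_le_self 2 (show a ≠ 0 by omega)
      exact_mod_cast this
    have hlog2 : (L : ℝ) * Real.log 2 ≤ Real.log a := by
      have := Real.log_le_log (by positivity) h2L
      rwa [Real.log_pow] at this
    have hl2 : (0.6931471803 : ℝ) < Real.log 2 := Real.log_two_gt_d9
    nlinarith [Nat.cast_nonneg (α := ℝ) L, Real.log_nonneg (by exact_mod_cast (by omega : (1:ℕ) ≤ a) : (1:ℝ) ≤ (a:ℝ))]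
  have hL3 : ((L : ℝ) + 1) ≤ 3 * Real.log a := by linarith
  have step : (Nk (n + 2) a : ℝ) ≤ (n + 2) * ((L : ℝ) + 1) ^ (n + 1) := by
    calc (Nk (n + 2) a : ℝ) ≤ ((n + 2) * (L + 1) ^ (n + 1) : ℕ) := by exact_mod_cast hcount
      _ = (n + 2) * ((L : ℝ) + 1) ^ (n + 1) := by push_cast; ring
  have hpow : ((L : ℝ) + 1) ^ (n + 1) ≤ (3 * Real.log a) ^ (n + 1) := by
    apply pow_le_pow_left₀ (by positivity) hL3
  have hfinal : (Nk (n + 2) a : ℝ) ≤ (n + 2) * (3 * Real.log a) ^ (n + 1) := by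
    calc (Nk (n + 2) a : ℝ) ≤ (n + 2) * ((L : ℝ) + 1) ^ (n + 1) := step
      _ ≤ (n + 2) * (3 * Real.log a) ^ (n + 1) := by
          apply mul_le_mul_of_nonneg_left hpow (by positivity)
  have hk1 : n + 2 - 1 = n + 1 := by omega
  rw [hk1]
  calc (Nk (n + 2) a : ℝ) ≤ (n + 2) * (3 * Real.log a) ^ (n + 1) := hfinal
    _ = (n + 2) * 3 ^ (n + 1) * Real.log a ^ (n + 1) := by rw [mul_pow]; ring
end

section
/- For every fixed integer k > 2 there exist a constant c > 0 and a threshold x_0 such that for all real x ≥ x_0, the number of integers a with 1 < a ≤ x and N_k(a) ≥ k! is at least c · x^{2/((k-1)(k-2))}. -/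
section Helpers

-- permutation invariance
lemma multinomial_comp_perm {k : ℕ} (m : Fin k → ℕ) (σ : Equiv.Perm (Fin k)) :
    Nat.multinomial Finset.univ (m ∘ σ) = Nat.multinomial Finset.univ m := by
  simp only [Nat.multinomial, Function.comp]
  rw [Equiv.sum_comp σ m, Equiv.prod_comp σ (fun i => Nat.factorial (m i))]

-- multinomial of all-zero on a finset is 1
lemma multinomial_eq_one_of_zero {α : Type*} (s : Finset α) (f : α → ℕ)
    (h : ∀ i ∈ s, f i = 0) : Nat.multinomial s f = 1 := by
  simp only [Nat.multinomial, Finset.sum_congr rfl h, Finset.sum_const, smul_eq_mul, mul_zero]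
  rw [Finset.prod_congr rfl (fun i hi => by rw [h i hi])]
  simp

-- each coordinate bounded
lemma coord_lt {k : ℕ} {a : ℕ} (ha : 2 ≤ a) {m : Fin k → ℕ}
    (hm : Nat.multinomial Finset.univ m = a) (i : Fin k) : m i < a := by
  have hins : Finset.univ = insert i (Finset.univ.erase i) := by
    rw [Finset.insert_erase (Finset.mem_univ i)]
  rw [hins, Nat.multinomial_insert (Finset.notMem_erase i _)] at hm
  rcases Nat.eq_zero_or_pos (∑ j ∈ Finset.univ.erase i, m j) with h0 | hpos
  · exfalso
    have hz : ∀ j ∈ Finset.univ.erase i, m j = 0 := by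
      intro j hj; exact (Finset.sum_eq_zero_iff.mp h0) j hj
    rw [multinomial_eq_one_of_zero _ _ hz, h0] at hm
    simp at hm; omega
  · have h1 : (m i + 1).choose (m i) ≤ (m i + ∑ j ∈ Finset.univ.erase i, m j).choose (m i) :=
      Nat.choose_le_choose _ (by omega)
    rw [Nat.choose_succ_self_right] at h1
    have h2 : (m i + ∑ j ∈ Finset.univ.erase i, m j).choose (m i) ≤ a := by
      calc (m i + ∑ j ∈ Finset.univ.erase i, m j).choose (m i)
          ≤ (m i + ∑ j ∈ Finset.univ.erase i, m j).choose (m i)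
            * Nat.multinomial (Finset.univ.erase i) m :=
            Nat.le_mul_of_pos_right _ (Nat.multinomial_pos _ _)
        _ = a := hm
    omega

lemma fiber_finite {k a : ℕ} (ha : 2 ≤ a) :
    {m : Fin k → ℕ | Nat.multinomial Finset.univ m = a}.Finite := by
  apply Set.Finite.subset (Set.Finite.pi (fun i : Fin k => Set.finite_Iio a))
  intro m hm
  intro i _
  exact coord_lt ha hm i

section Construction
variable {k : ℕ}

/-- the tuple: g n 0 = n + (k-1), g n i = (k-1) - i for i ≠ 0 -/
def gt (k n : ℕ) : Fin k → ℕ := fun i => if i.val = 0 then n + (k - 1) else (k - 1) - i.val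

lemma gt_injective (hk : 2 < k) (n : ℕ) : Function.Injective (gt k n) := by
  intro i j hij
  unfold gt at hij
  by_cases hi : i.val = 0 <;> by_cases hj : j.val = 0 <;> simp [hi, hj] at hij ⊢
  · exact Fin.ext (by omega)
  · exfalso; have := j.isLt; omega
  · exfalso; have := i.isLt; omega
  · have hi' := i.isLt; have hj' := j.isLt
    exact Fin.ext (by omega)

lemma Nk_ge (hk : 2 < k) (n : ℕ) (a : ℕ) (ha : 2 ≤ a)
    (hval : Nat.multinomial Finset.univ (gt k n) = a) :
    Nat.factorial k ≤ Nk k a := by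
  classical
  set S : Set (Fin k → ℕ) := {m : Fin k → ℕ | Nat.multinomial Finset.univ m = a}
  have hfin : S.Finite := fiber_finite ha
  set T : Set (Fin k → ℕ) := (fun σ : Equiv.Perm (Fin k) => gt k n ∘ σ) '' Set.univ
  have hsub : T ⊆ S := by
    rintro _ ⟨σ, -, rfl⟩
    show Nat.multinomial Finset.univ (gt k n ∘ σ) = a
    rw [multinomial_comp_perm _ σ, hval]
  have hinj : Function.Injective (fun σ : Equiv.Perm (Fin k) => gt k n ∘ σ) := by
    intro σ τ h
    ext i
    have := congrFun h i
    exact congrArg Fin.val (gt_injective hk n this)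
  have hTcard : T.ncard = Nat.factorial k := by
    rw [Set.ncard_image_of_injective _ hinj, Set.ncard_univ]
    simp [Nat.card_eq_fintype_card, Fintype.card_perm, Fintype.card_fin]
  calc Nat.factorial k = T.ncard := hTcard.symm
    _ ≤ S.ncard := Set.ncard_le_ncard hsub hfin
    _ = Nk k a := rfl

end Construction

section Formula
variable {k : ℕ}

/-- zero element of Fin k -/
def z (k : ℕ) (h : 0 < k) : Fin k := ⟨0, h⟩

/-- small-part sum -/
def Ts (k : ℕ) (h : 0 < k) : ℕ := ∑ i ∈ Finset.univ.erase (z k h), ((k - 1) - (i : ℕ))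
/-- small-part multinomial -/
def Ms (k : ℕ) (h : 0 < k) : ℕ :=
  Nat.multinomial (Finset.univ.erase (z k h)) (fun i : Fin k => (k - 1) - (i : ℕ))

lemma Ms_pos (k : ℕ) (h : 0 < k) : 0 < Ms k h := Nat.multinomial_pos _ _

lemma aval (hk : 0 < k) (n : ℕ) :
    Nat.multinomial Finset.univ (gt k n)
      = (n + (k - 1) + Ts k hk).choose (Ts k hk) * Ms k hk := by
  classical
  have h0 : z k hk ∉ Finset.univ.erase (z k hk) := Finset.notMem_erase _ _
  have hins : (Finset.univ : Finset (Fin k)) = insert (z k hk) (Finset.univ.erase (z k hk)) := by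
    rw [Finset.insert_erase (Finset.mem_univ _)]
  rw [hins, Nat.multinomial_insert h0]
  have hg0 : gt k n (z k hk) = n + (k - 1) := by simp [gt, z]
  have hsum : ∑ i ∈ Finset.univ.erase (z k hk), gt k n i = Ts k hk := by
    apply Finset.sum_congr rfl
    intro i hi
    have hne : (i : ℕ) ≠ 0 := by
      intro h; exact (Finset.mem_erase.mp hi).1 (Fin.ext h)
    simp [gt, hne]
  have hmul : Nat.multinomial (Finset.univ.erase (z k hk)) (gt k n) = Ms k hk := by
    apply Nat.multinomial_congr
    intro i hi
    have hne : (i : ℕ) ≠ 0 := by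
      intro h; exact (Finset.mem_erase.mp hi).1 (Fin.ext h)
    simp [gt, hne]
  rw [hg0, hsum, hmul, Nat.choose_symm_add]

lemma Ts_eq (hk : 2 < k) (h : 0 < k) : 2 * Ts k h = (k - 1) * (k - 2) := by
  classical
  have key : (k - 1) + Ts k h = ∑ i : Fin k, ((k - 1) - (i : ℕ)) := by
    rw [← Finset.add_sum_erase Finset.univ _ (Finset.mem_univ (z k h))]
    simp [Ts, z]
  have h2 : ∑ i : Fin k, ((k - 1) - (i : ℕ)) = ∑ j ∈ Finset.range k, ((k - 1) - j) :=
    Fin.sum_univ_eq_sum_range (fun j => (k - 1) - j) k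
  have h3 : ∑ j ∈ Finset.range k, (k - 1 - j) = ∑ j ∈ Finset.range k, j :=
    Finset.sum_range_reflect (fun j => j) k
  have h4 : (∑ j ∈ Finset.range k, j) * 2 = k * (k - 1) := Finset.sum_range_id_mul_two k
  have key2 : ((k - 1) + Ts k h) * 2 = k * (k - 1) := by rw [key, h2, h3, h4]
  obtain ⟨u, rfl⟩ : ∃ u, k = u + 3 := ⟨k - 3, by omega⟩
  have key2' : (u + 2 + Ts (u + 3) h) * 2 = (u + 3) * (u + 2) := key2
  have expand : (u + 3) * (u + 2) = (u + 2) * (u + 1) + 2 * (u + 2) := by ring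
  show 2 * Ts (u + 3) h = (u + 2) * (u + 1)
  linarith [key2', expand]

lemma Ts_pos (hk : 2 < k) (h : 0 < k) : 1 ≤ Ts k h := by
  have he := Ts_eq hk h
  have hpos : 0 < (k - 1) * (k - 2) := Nat.mul_pos (by omega) (by omega)
  by_contra hc
  push_neg at hc
  have hz : Ts k h = 0 := by omega
  rw [hz] at he
  simp at he
  omega

lemma choose_strict_mono {T n : ℕ} (h1 : 1 ≤ T) (h2 : T ≤ n + 1) :
    n.choose T < (n + 1).choose T := by
  obtain ⟨t, rfl⟩ : ∃ t, T = t + 1 := ⟨T - 1, by omega⟩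
  have hps : (n + 1).choose (t + 1) = n.choose t + n.choose (t + 1) := by
    simpa using Nat.choose_succ_succ n t
  have hpos : 0 < n.choose t := Nat.choose_pos (by omega)
  omega

lemma aval_lt (hk : 2 < k) (h : 0 < k) (n : ℕ) :
    Nat.multinomial Finset.univ (gt k n) < Nat.multinomial Finset.univ (gt k (n + 1)) := by
  rw [aval h, aval h]
  apply Nat.mul_lt_mul_of_lt_of_le _ le_rfl (Ms_pos k h)
  have he : n + (k - 1) + Ts k h + 1 = (n + 1) + (k - 1) + Ts k h := by omega
  rw [← he]
  exact choose_strict_mono (Ts_pos hk h) (by omega)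

lemma aval_two_le (hk : 2 < k) (h : 0 < k) (n : ℕ) :
    2 ≤ Nat.multinomial Finset.univ (gt k n) := by
  rw [aval h]
  have h1 : Ts k h + 1 ≤ Nat.choose (Ts k h + 1) (Ts k h) := by
    rw [Nat.choose_succ_self_right]
  have h2 : Nat.choose (Ts k h + 1) (Ts k h) ≤ Nat.choose (n + (k - 1) + Ts k h) (Ts k h) :=
    Nat.choose_le_choose _ (by omega)
  have hM := Ms_pos k h
  have hT := Ts_pos hk h
  calc 2 ≤ Ts k h + 1 := by omega
    _ ≤ (n + (k - 1) + Ts k h).choose (Ts k h) := le_trans h1 h2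
    _ ≤ (n + (k - 1) + Ts k h).choose (Ts k h) * Ms k h := Nat.le_mul_of_pos_right _ hM

lemma aval_upper (hk : 2 < k) (h : 0 < k) (n : ℕ) (hn : 1 ≤ n) :
    Nat.multinomial Finset.univ (gt k n)
      ≤ (Ms k h * (1 + (k - 1) + Ts k h) ^ Ts k h) * n ^ Ts k h := by
  rw [aval h]
  have h1 : (n + (k - 1) + Ts k h).choose (Ts k h) ≤ (n + (k - 1) + Ts k h) ^ Ts k h :=
    le_trans (Nat.choose_le_descFactorial _ _) (Nat.descFactorial_le_pow _ _)
  have h2 : n + (k - 1) + Ts k h ≤ (1 + (k - 1) + Ts k h) * n := by nlinarith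
  calc (n + (k - 1) + Ts k h).choose (Ts k h) * Ms k h
      ≤ (n + (k - 1) + Ts k h) ^ Ts k h * Ms k h := Nat.mul_le_mul_right _ h1
    _ ≤ ((1 + (k - 1) + Ts k h) * n) ^ Ts k h * Ms k h :=
        Nat.mul_le_mul_right _ (Nat.pow_le_pow_left h2 _)
    _ = (1 + (k - 1) + Ts k h) ^ Ts k h * n ^ Ts k h * Ms k h := by rw [mul_pow]
    _ = (Ms k h * (1 + (k - 1) + Ts k h) ^ Ts k h) * n ^ Ts k h := by ring

end Formula

end Helpers

theorem many_large_Nk (k : ℕ) (hk : 2 < k) :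
    ∃ c : ℝ, 0 < c ∧ ∃ x₀ : ℝ, ∀ x : ℝ, x₀ ≤ x →
      c * x ^ ((2 : ℝ) / (((k : ℝ) - 1) * ((k : ℝ) - 2))) ≤
        (((Finset.Ioc 1 ⌊x⌋₊).filter (fun a => Nat.factorial k ≤ Nk k a)).card : ℝ) := by
  classical
  have h0k : 0 < k := by omega
  set T : ℕ := Ts k h0k with hTdef
  set M : ℕ := Ms k h0k with hMdef
  set B : ℕ := M * (1 + (k - 1) + T) ^ T with hBdef
  have hTpos : 1 ≤ T := Ts_pos hk h0k
  have hBpos : 0 < B := Nat.mul_pos (Ms_pos k h0k) (Nat.pow_pos (by omega))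
  set t : ℝ := (T : ℝ) with htdef
  have htpos : (0 : ℝ) < t := by
    simp only [htdef]
    exact_mod_cast hTpos
  -- exponent identity
  have hexp : (2 : ℝ) / (((k : ℝ) - 1) * ((k : ℝ) - 2)) = 1 / t := by
    have h1 : ((k : ℝ) - 1) = ((k - 1 : ℕ) : ℝ) := by
      rw [Nat.cast_sub (by omega : 1 ≤ k)]; norm_num
    have h2 : ((k : ℝ) - 2) = ((k - 2 : ℕ) : ℝ) := by
      rw [Nat.cast_sub (by omega : 2 ≤ k)]; norm_num
    have h3 : (k - 1) * (k - 2) = 2 * T := (Ts_eq hk h0k).symm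
    rw [h1, h2, ← Nat.cast_mul, h3]
    push_cast
    rw [← htdef]
    field_simp
  set Q : ℝ := (B : ℝ) ^ ((1 : ℝ) / t) with hQdef
  have hQpos : 0 < Q := Real.rpow_pos_of_pos (by exact_mod_cast hBpos) _
  refine ⟨(1 / Q) / 2, by positivity, (2 * Q) ^ t, ?_⟩
  intro x hx
  have hx0 : (0 : ℝ) < x := lt_of_lt_of_le (Real.rpow_pos_of_pos (by positivity) t) hx
  rw [hexp]
  set P : ℝ := x ^ ((1 : ℝ) / t) with hPdef
  have hPpos : 0 < P := Real.rpow_pos_of_pos hx0 _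
  -- P ≥ 2Q
  have hP2Q : 2 * Q ≤ P := by
    have h1 : ((2 * Q) ^ t) ^ ((1 : ℝ) / t) ≤ x ^ ((1 : ℝ) / t) :=
      Real.rpow_le_rpow (by positivity) hx (by positivity)
    have h2 : ((2 * Q) ^ t) ^ ((1 : ℝ) / t) = 2 * Q := by
      rw [← Real.rpow_mul (by positivity), mul_one_div, div_self (ne_of_gt htpos),
        Real.rpow_one]
    rw [← h2]; exact h1
  set N : ℕ := ⌊(x / B) ^ ((1 : ℝ) / t)⌋₊ with hNdef
  -- every n in [1, N] gives a good a-value ≤ ⌊x⌋₊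
  have hsub : (Finset.Icc 1 N).image (fun n => Nat.multinomial Finset.univ (gt k n)) ⊆
      (Finset.Ioc 1 ⌊x⌋₊).filter (fun a => Nat.factorial k ≤ Nk k a) := by
    intro b hb
    obtain ⟨n, hn, rfl⟩ := Finset.mem_image.mp hb
    obtain ⟨hn1, hnN⟩ := Finset.mem_Icc.mp hn
    have h2le : 2 ≤ Nat.multinomial Finset.univ (gt k n) := aval_two_le hk h0k n
    have hub : Nat.multinomial Finset.univ (gt k n) ≤ B * n ^ T := by
      have := aval_upper hk h0k n hn1
      calc Nat.multinomial Finset.univ (gt k n)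
          ≤ (M * (1 + (k - 1) + T) ^ T) * n ^ T := this
        _ = B * n ^ T := by rw [hBdef]
    have hreal : ((B * n ^ T : ℕ) : ℝ) ≤ x := by
      push_cast
      have hn_le : (n : ℝ) ≤ (x / B) ^ ((1 : ℝ) / t) := by
        have hNy : ((N : ℕ) : ℝ) ≤ (x / B) ^ ((1 : ℝ) / t) := Nat.floor_le (by positivity)
        exact le_trans (by exact_mod_cast hnN) hNy
      have hpow : ((n : ℝ)) ^ T ≤ ((x / B) ^ ((1 : ℝ) / t)) ^ T :=
        pow_le_pow_left₀ (by positivity) hn_le T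
      have hsimp : ((x / B) ^ ((1 : ℝ) / t)) ^ T = x / B := by
        rw [← Real.rpow_natCast ((x / B) ^ ((1 : ℝ) / t)) T, ← Real.rpow_mul (by positivity)]
        rw [← htdef, one_div, inv_mul_cancel₀ (ne_of_gt htpos), Real.rpow_one]
      have hBr : (0:ℝ) < (B : ℝ) := by exact_mod_cast hBpos
      calc (B : ℝ) * (n : ℝ) ^ T ≤ (B : ℝ) * (x / B) := by
            rw [← hsimp]; exact mul_le_mul_of_nonneg_left hpow (le_of_lt hBr)
        _ = x := by field_simp
    have hfloor : Nat.multinomial Finset.univ (gt k n) ≤ ⌊x⌋₊ := by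
      apply Nat.le_floor
      calc ((Nat.multinomial Finset.univ (gt k n) : ℕ) : ℝ)
          ≤ ((B * n ^ T : ℕ) : ℝ) := by exact_mod_cast hub
        _ ≤ x := hreal
    rw [Finset.mem_filter, Finset.mem_Ioc]
    exact ⟨⟨by omega, hfloor⟩, Nk_ge hk n _ h2le rfl⟩
  -- injectivity of a
  have hmono : StrictMono (fun n => Nat.multinomial Finset.univ (gt k n)) :=
    strictMono_nat_of_lt_succ (fun n => aval_lt hk h0k n)
  have hcard : N ≤ ((Finset.Ioc 1 ⌊x⌋₊).filter (fun a => Nat.factorial k ≤ Nk k a)).card := by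
    calc N = (Finset.Icc 1 N).card := by rw [Nat.card_Icc]; omega
      _ = ((Finset.Icc 1 N).image (fun n => Nat.multinomial Finset.univ (gt k n))).card :=
          (Finset.card_image_of_injective _ hmono.injective).symm
      _ ≤ _ := Finset.card_le_card hsub
  -- real estimates
  have hNreal : (x / B) ^ ((1 : ℝ) / t) - 1 ≤ (N : ℝ) := by
    have := Nat.lt_floor_add_one ((x / B) ^ ((1 : ℝ) / t))
    rw [← hNdef] at this
    linarith
  have hyPQ : (x / B) ^ ((1 : ℝ) / t) = P / Q := by
    rw [hPdef, hQdef, Real.div_rpow (le_of_lt hx0) (by positivity)]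
  have hR2 : 2 ≤ P / Q := (le_div_iff₀ hQpos).mpr (by linarith)
  have hfin : (1 / Q) / 2 * P ≤ (N : ℝ) := by
    have h1 : (1 / Q) / 2 * P = (P / Q) / 2 := by ring
    rw [h1]
    have : P / Q / 2 ≤ P / Q - 1 := by linarith
    linarith [hNreal, hyPQ ▸ hNreal]
  calc (1 / Q) / 2 * x ^ ((1:ℝ)/t) = (1 / Q) / 2 * P := by rw [hPdef]
    _ ≤ (N : ℝ) := hfin
    _ ≤ _ := by exact_mod_cast hcard
end

section
/- For every fixed integer k ≥ 7, the set of integers a > 1 with N_k(a) ≥ 7·k!/2 + k(k-1) is infinite. -/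
open Finset Nat


lemma le_choose_of_lt : ∀ (n r : ℕ), 1 ≤ r → r < n → n ≤ n.choose r := by
  intro n
  induction n with
  | zero => intro r h1 h2; omega
  | succ n ih =>
    intro r h1 h2
    rcases eq_or_lt_of_le h1 with h | h
    · rw [← h, Nat.choose_one_right]
    · rcases eq_or_lt_of_le (Nat.lt_succ_iff.mp h2) with h' | h'
      · rw [h', Nat.choose_succ_self_right]
      · obtain ⟨q, rfl⟩ : ∃ q, r = q + 1 := ⟨r - 1, by omega⟩
        rw [Nat.choose_succ_succ]
        have ha := ih q (by omega) (by omega)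
        have hb := Nat.choose_pos (show q + 1 ≤ n by omega)
        simp only [Nat.succ_eq_add_one] at *
        omega

lemma choose_le_multinomial {k : ℕ} (i : Fin k) (f : Fin k → ℕ) :
    (∑ j, f j).choose (f i) ≤ Nat.multinomial Finset.univ f := by
  classical
  have h0 : (Finset.univ : Finset (Fin k)) = insert i (Finset.univ.erase i) :=
    (Finset.insert_erase (Finset.mem_univ i)).symm
  rw [h0, Nat.multinomial_insert (Finset.notMem_erase i _),
    Finset.sum_insert (Finset.notMem_erase i _)]
  exact Nat.le_mul_of_pos_right _ (Nat.multinomial_pos _ _)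

lemma sum_le_multinomial {k : ℕ} (f : Fin k → ℕ) (h : 1 < Nat.multinomial Finset.univ f) :
    ∑ j, f j ≤ Nat.multinomial Finset.univ f := by
  classical
  by_cases hex : ∃ i, 1 ≤ f i ∧ f i < ∑ j, f j
  · obtain ⟨i, h1, h2⟩ := hex
    exact le_trans (le_choose_of_lt _ _ h1 h2) (choose_le_multinomial i f)
  · exfalso
    push_neg at hex
    have hM := Nat.multinomial_spec (Finset.univ : Finset (Fin k)) f
    have hprod : (∏ j, (f j)!) = (∑ j, f j)! := by
      by_cases hz : ∀ j, f j = 0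
      · simp [hz]
      · push_neg at hz
        obtain ⟨i, hi⟩ := hz
        have hile : f i ≤ ∑ j, f j :=
          Finset.single_le_sum (fun _ _ => Nat.zero_le _) (Finset.mem_univ i)
        have hieq : f i = ∑ j, f j := le_antisymm hile (hex i (by omega))
        have hsum : f i + ∑ j ∈ Finset.univ.erase i, f j = ∑ j, f j :=
          Finset.add_sum_erase _ f (Finset.mem_univ i)
        have hrest : ∀ j ∈ Finset.univ.erase i, f j = 0 := by
          intro j hj
          have h0 : ∑ j ∈ Finset.univ.erase i, f j = 0 := by omega
          exact (Finset.sum_eq_zero_iff.mp h0) j hj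
        have h1 : (Finset.univ : Finset (Fin k)) = insert i (Finset.univ.erase i) :=
          (Finset.insert_erase (Finset.mem_univ i)).symm
        rw [h1, Finset.prod_insert (Finset.notMem_erase i _)]
        rw [Finset.prod_congr rfl (fun j hj => by rw [hrest j hj])]
        rw [Finset.sum_insert (Finset.notMem_erase i _)]
        have h0 : ∑ j ∈ Finset.univ.erase i, f j = 0 := by omega
        simp [h0]
    rw [hprod] at hM
    have := Nat.factorial_pos (∑ j, f j)
    nlinarith

lemma multinomial_comp_equiv {k : ℕ} (f : Fin k → ℕ) (σ : Equiv.Perm (Fin k)) :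
    Nat.multinomial Finset.univ (f ∘ σ) = Nat.multinomial Finset.univ f := by
  simp only [Nat.multinomial, Function.comp]
  rw [Equiv.sum_comp σ f, Equiv.prod_comp σ (fun i => (f i)!)]

lemma finite_fiber (k a : ℕ) (ha : 1 < a) :
    {m : Fin k → ℕ | Nat.multinomial Finset.univ m = a}.Finite := by
  apply Set.Finite.subset (Set.finite_Icc (fun _ : Fin k => 0) (fun _ => a))
  intro m hm
  simp only [Set.mem_setOf_eq] at hm
  refine Set.mem_Icc.mpr ⟨fun i => Nat.zero_le _, fun i => ?_⟩
  calc m i ≤ ∑ j, m j := Finset.single_le_sum (fun _ _ => Nat.zero_le _) (Finset.mem_univ i)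
  _ ≤ a := hm ▸ sum_le_multinomial m (by rw [hm]; exact ha)


def core (x : ℕ) : Fin 4 → Fin 7 → ℕ :=
  ![![0,1,4,7,10,13,x], ![0,1,5,6,9,14,x], ![0,2,3,6,10,14,x], ![0,2,4,5,9,15,x]]

@[simp] lemma core_ev_0_0 (x : ℕ) : core x 0 0 = 0 := rfl
@[simp] lemma core_ev_0_1 (x : ℕ) : core x 0 1 = 1 := rfl
@[simp] lemma core_ev_0_2 (x : ℕ) : core x 0 2 = 4 := rfl
@[simp] lemma core_ev_0_3 (x : ℕ) : core x 0 3 = 7 := rfl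
@[simp] lemma core_ev_0_4 (x : ℕ) : core x 0 4 = 10 := rfl
@[simp] lemma core_ev_0_5 (x : ℕ) : core x 0 5 = 13 := rfl
@[simp] lemma core_ev_0_6 (x : ℕ) : core x 0 6 = x := rfl
@[simp] lemma core_ev_1_0 (x : ℕ) : core x 1 0 = 0 := rfl
@[simp] lemma core_ev_1_1 (x : ℕ) : core x 1 1 = 1 := rfl
@[simp] lemma core_ev_1_2 (x : ℕ) : core x 1 2 = 5 := rfl
@[simp] lemma core_ev_1_3 (x : ℕ) : core x 1 3 = 6 := rfl
@[simp] lemma core_ev_1_4 (x : ℕ) : core x 1 4 = 9 := rfl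
@[simp] lemma core_ev_1_5 (x : ℕ) : core x 1 5 = 14 := rfl
@[simp] lemma core_ev_1_6 (x : ℕ) : core x 1 6 = x := rfl
@[simp] lemma core_ev_2_0 (x : ℕ) : core x 2 0 = 0 := rfl
@[simp] lemma core_ev_2_1 (x : ℕ) : core x 2 1 = 2 := rfl
@[simp] lemma core_ev_2_2 (x : ℕ) : core x 2 2 = 3 := rfl
@[simp] lemma core_ev_2_3 (x : ℕ) : core x 2 3 = 6 := rfl
@[simp] lemma core_ev_2_4 (x : ℕ) : core x 2 4 = 10 := rfl
@[simp] lemma core_ev_2_5 (x : ℕ) : core x 2 5 = 14 := rfl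
@[simp] lemma core_ev_2_6 (x : ℕ) : core x 2 6 = x := rfl
@[simp] lemma core_ev_3_0 (x : ℕ) : core x 3 0 = 0 := rfl
@[simp] lemma core_ev_3_1 (x : ℕ) : core x 3 1 = 2 := rfl
@[simp] lemma core_ev_3_2 (x : ℕ) : core x 3 2 = 4 := rfl
@[simp] lemma core_ev_3_3 (x : ℕ) : core x 3 3 = 5 := rfl
@[simp] lemma core_ev_3_4 (x : ℕ) : core x 3 4 = 9 := rfl
@[simp] lemma core_ev_3_5 (x : ℕ) : core x 3 5 = 15 := rfl
@[simp] lemma core_ev_3_6 (x : ℕ) : core x 3 6 = x := rfl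
lemma core_sum (x : ℕ) (j : Fin 4) : ∑ i, core x j i = 35 + x := by
  fin_cases j <;> rw [Fin.sum_univ_seven] <;> simp <;> ring

lemma core_prod (x : ℕ) (j : Fin 4) :
    ∏ i, (core x j i)! = 2733286318040678400000 * (x)! := by
  fin_cases j <;> rw [Fin.prod_univ_seven] <;> simp <;>
    norm_num [show (1:ℕ)! = 1 from rfl, show (2:ℕ)! = 2 from rfl, show (3:ℕ)! = 6 from rfl,
      show (4:ℕ)! = 24 from rfl, show (5:ℕ)! = 120 from rfl, show (6:ℕ)! = 720 from rfl,
      show (7:ℕ)! = 5040 from rfl, show (9:ℕ)! = 362880 from rfl,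
      show (10:ℕ)! = 3628800 from rfl, show (13:ℕ)! = 6227020800 from rfl,
      show (14:ℕ)! = 87178291200 from rfl, show (15:ℕ)! = 1307674368000 from rfl] <;> ring

lemma core_inj (x : ℕ) (hx : 16 ≤ x) (j : Fin 4) : Function.Injective (core x j) := by
  intro i1 i2 h
  fin_cases j <;> fin_cases i1 <;> fin_cases i2 <;> simp_all <;> omega

lemma core_val (x : ℕ) (j : Fin 4) (a : Fin 7) : core x j a ≤ 15 ∨ core x j a = x := by
  fin_cases j <;> fin_cases a <;> simp

def MM (u x : ℕ) (j : Fin 4) : Fin (7+u) → ℕ :=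
  Fin.append (core x j) (fun i : Fin u => 16 + (i : ℕ))

lemma MM_inj (u x : ℕ) (hx : 16 + u ≤ x) (j : Fin 4) : Function.Injective (MM u x j) := by
  intro i1 i2 h
  induction i1 using Fin.addCases with
  | left a =>
    induction i2 using Fin.addCases with
    | left b =>
      simp only [MM, Fin.append_left] at h
      exact congrArg _ (core_inj x (by omega) j h)
    | right b =>
      exfalso
      simp only [MM, Fin.append_left, Fin.append_right] at h
      rcases core_val x j a with hv | hv <;> [skip; skip] <;>
        · have hb := b.isLt; omega
  | right a =>
    induction i2 using Fin.addCases with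
    | left b =>
      exfalso
      simp only [MM, Fin.append_left, Fin.append_right] at h
      rcases core_val x j b with hv | hv <;>
        · have ha := a.isLt; omega
    | right b =>
      simp only [MM, Fin.append_right] at h
      have : a = b := by
        have := Fin.val_eq_val a b
        apply Fin.ext; omega
      exact congrArg _ this

lemma mem_range_MM (u x : ℕ) (j : Fin 4) (v : ℕ) (hv : v < 16) :
    v ∈ Set.range (MM u x j) ↔ ∃ a : Fin 7, core x j a = v := by
  constructor
  · rintro ⟨i, hi⟩
    induction i using Fin.addCases with
    | left a => exact ⟨a, by simpa [MM, Fin.append_left] using hi⟩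
    | right b =>
      exfalso
      simp only [MM, Fin.append_right] at hi
      omega
  · rintro ⟨a, ha⟩
    exact ⟨Fin.castAdd u a, by simp [MM, Fin.append_left, ha]⟩

lemma range_distinct (u x : ℕ) (hx : 16 + u ≤ x) {j j' : Fin 4}
    (h : Set.range (MM u x j) = Set.range (MM u x j')) : j = j' := by
  have c1 : ∀ jj : Fin 4, ((∃ a : Fin 7, core x jj a = 1) ↔ (jj = 0 ∨ jj = 1)) := by
    intro jj
    constructor
    · rintro ⟨a, ha⟩
      fin_cases jj <;> [skip; skip; skip; skip] <;> fin_cases a <;> simp_all <;> omega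
    · rintro (rfl | rfl) <;> exact ⟨1, by simp⟩
  have c3 : ∀ jj : Fin 4, ((∃ a : Fin 7, core x jj a = 3) ↔ jj = 2) := by
    intro jj
    constructor
    · rintro ⟨a, ha⟩
      fin_cases jj <;> [skip; skip; skip; skip] <;> fin_cases a <;> simp_all <;> omega
    · rintro rfl; exact ⟨2, by simp⟩
  have c4 : ∀ jj : Fin 4, ((∃ a : Fin 7, core x jj a = 4) ↔ (jj = 0 ∨ jj = 3)) := by
    intro jj
    constructor
    · rintro ⟨a, ha⟩
      fin_cases jj <;> [skip; skip; skip; skip] <;> fin_cases a <;> simp_all <;> omega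
    · rintro (rfl | rfl)
      · exact ⟨2, by simp⟩
      · exact ⟨2, by simp⟩
  have e1 : (j = 0 ∨ j = 1) ↔ (j' = 0 ∨ j' = 1) := by
    rw [← c1 j, ← c1 j', ← mem_range_MM u x j 1 (by norm_num),
      ← mem_range_MM u x j' 1 (by norm_num), h]
  have e3 : (j = 2) ↔ (j' = 2) := by
    rw [← c3 j, ← c3 j', ← mem_range_MM u x j 3 (by norm_num),
      ← mem_range_MM u x j' 3 (by norm_num), h]
  have e4 : (j = 0 ∨ j = 3) ↔ (j' = 0 ∨ j' = 3) := by
    rw [← c4 j, ← c4 j', ← mem_range_MM u x j 4 (by norm_num),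
      ← mem_range_MM u x j' 4 (by norm_num), h]
  fin_cases j <;> fin_cases j' <;> simp_all

lemma MM_multinomial (u x : ℕ) (j : Fin 4) :
    Nat.multinomial Finset.univ (MM u x j) = Nat.multinomial Finset.univ (MM u x 0) := by
  have hs : ∑ i, MM u x j i = ∑ i, MM u x 0 i := by
    rw [Fin.sum_univ_add (MM u x j), Fin.sum_univ_add (MM u x 0)]
    simp only [MM, Fin.append_left, Fin.append_right]
    rw [core_sum, core_sum]
  have hp : ∏ i, (MM u x j i)! = ∏ i, (MM u x 0 i)! := by
    rw [Fin.prod_univ_add (fun i => (MM u x j i)!), Fin.prod_univ_add (fun i => (MM u x 0 i)!)]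
    simp only [MM, Fin.append_left, Fin.append_right]
    rw [core_prod, core_prod]
  unfold Nat.multinomial
  rw [hs, hp]


theorem infinitely_many_very_large_Nk (k : ℕ) (hk : 7 ≤ k) :
    {a : ℕ | 1 < a ∧ 7 * Nat.factorial k / 2 + k * (k - 1) ≤ Nk k a}.Infinite := by
  classical
  obtain ⟨u, rfl⟩ : ∃ u, k = 7 + u := ⟨k - 7, by omega⟩
  apply Set.infinite_of_forall_exists_gt
  intro b
  set x := 16 + u + b with hxdef
  have hx : 16 + u ≤ x := by omega
  set a := Nat.multinomial Finset.univ (MM u x 0) with hadef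
  have hsum_lb : x ≤ ∑ i, MM u x 0 i := by
    have h := Finset.single_le_sum (f := MM u x 0) (fun _ _ => Nat.zero_le _)
      (Finset.mem_univ (Fin.castAdd u (6 : Fin 7)))
    simpa [MM, Fin.append_left] using h
  have honem : MM u x 0 (Fin.castAdd u (1 : Fin 7)) = 1 := by
    simp [MM, Fin.append_left]
  have hage : ∑ i, MM u x 0 i ≤ a := by
    have h := choose_le_multinomial (Fin.castAdd u (1 : Fin 7)) (MM u x 0)
    rwa [honem, Nat.choose_one_right] at h
  have ha1 : 1 < a := by omega
  have hab : b < a := by omega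
  refine ⟨a, ⟨ha1, ?_⟩, hab⟩
  have hfin := finite_fiber (7 + u) a ha1
  set T : Finset (Fin (7 + u) → ℕ) :=
    Finset.image (fun p : Fin 4 × Equiv.Perm (Fin (7 + u)) => MM u x p.1 ∘ ⇑p.2)
      Finset.univ with hT
  have hinj : Function.Injective
      (fun p : Fin 4 × Equiv.Perm (Fin (7 + u)) => MM u x p.1 ∘ ⇑p.2) := by
    rintro ⟨j, σ⟩ ⟨j', σ'⟩ h
    simp only at h
    have hr : Set.range (MM u x j) = Set.range (MM u x j') := by
      rw [← σ.surjective.range_comp (MM u x j), ← σ'.surjective.range_comp (MM u x j'), h]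
    have hj : j = j' := range_distinct u x hx hr
    subst hj
    have hσ : σ = σ' := by
      ext i
      exact Fin.val_eq_of_eq (MM_inj u x hx j (congrFun h i))
    rw [hσ]
  have hsub : ↑T ⊆ {m : Fin (7 + u) → ℕ | Nat.multinomial Finset.univ m = a} := by
    intro m hm
    simp only [hT, Finset.coe_image, Set.mem_image, Finset.coe_univ, Set.mem_univ,
      true_and] at hm
    obtain ⟨p, rfl⟩ := hm
    simp only [Set.mem_setOf_eq]
    rw [multinomial_comp_equiv, MM_multinomial]
  have hcard : T.card = 4 * Nat.factorial (7 + u) := by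
    rw [hT, Finset.card_image_of_injective _ hinj, Finset.card_univ, Fintype.card_prod,
      Fintype.card_perm, Fintype.card_fin, Fintype.card_fin]
  have hle : T.card ≤ Nk (7 + u) a := by
    have h2 := Set.ncard_le_ncard hsub hfin
    rwa [Set.ncard_coe_finset] at h2
  refine le_trans ?_ hle
  rw [hcard]
  -- arithmetic: 7 * (7+u)! / 2 + (7+u) * (7+u-1) ≤ 4 * (7+u)!
  have h1 : (7 + u)! = (7 + u) * ((6 + u) * (5 + u)!) := by
    rw [show 7 + u = (6 + u) + 1 by ring, Nat.factorial_succ]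
    congr 1
    rw [show 6 + u = (5 + u) + 1 by ring, Nat.factorial_succ]
  obtain ⟨d, hd⟩ : 2 ∣ (5 + u)! := Nat.dvd_factorial (by norm_num) (by omega)
  have hd1 : 1 ≤ d := by
    have := Nat.factorial_pos (5 + u); omega
  have hdiv : 7 * (7 + u)! / 2 = 7 * ((7 + u) * ((6 + u) * d)) := by
    rw [h1, hd, show 7 * ((7 + u) * ((6 + u) * (2 * d))) = 2 * (7 * ((7 + u) * ((6 + u) * d)))
      by ring]
    exact Nat.mul_div_cancel_left _ (by norm_num)
  rw [hdiv, h1, hd, show 7 + u - 1 = 6 + u by omega]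
  have hK : (7 + u) * (6 + u) ≤ ((7 + u) * (6 + u)) * d :=
    Nat.le_mul_of_pos_right _ (by omega)
  nlinarith
end

section
/- For a = 2671465728531600 one has N_3(a) ≥ 30; in particular, a equals the multinomial coefficients 37!/(17!·11!·9!), 38!/(19!·11!·8!), 39!/(19!·14!·6!), 40!/(19!·16!·5!), and a!/((a-1)!·1!·0!), each with its permutations of the lower entries. -/
private lemma tri (m : Fin 3 → ℕ) : Nat.multinomial Finset.univ m
    = (m 0 + (m 1 + m 2)).choose (m 0) * (m 1 + m 2).choose (m 1) := by
  have huniv : (Finset.univ : Finset (Fin 3)) = insert 0 {1, 2} := by decide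
  rw [huniv, Nat.multinomial_insert (by decide),
    Nat.binomial_eq_choose (by decide : (1:Fin 3) ≠ 2),
    Finset.sum_pair (by decide : (1:Fin 3) ≠ 2)]

private lemma deg1 (n : ℕ) (h : 1 ≤ n) : Nat.multinomial Finset.univ ![n-1,1,0] = n := by
  rw [tri]
  simp only [Matrix.cons_val_zero, Matrix.cons_val_one, Matrix.head_cons,
    Matrix.cons_val_two, Matrix.tail_cons]
  have e1 : n - 1 + (1 + 0) = n := by omega
  rw [e1]
  have e2 : n.choose (n-1) = n := by
    rw [Nat.choose_symm (by omega : 1 ≤ n), Nat.choose_one_right]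
  rw [e2]; simp

private lemma deg2 (n : ℕ) (h : 1 ≤ n) : Nat.multinomial Finset.univ ![n-1,0,1] = n := by
  rw [tri]
  simp only [Matrix.cons_val_zero, Matrix.cons_val_one, Matrix.head_cons,
    Matrix.cons_val_two, Matrix.tail_cons]
  have e1 : n - 1 + (0 + 1) = n := by omega
  rw [e1, Nat.choose_symm (by omega : 1 ≤ n), Nat.choose_one_right]; simp

private lemma deg3 (n : ℕ) (h : 1 ≤ n) : Nat.multinomial Finset.univ ![1,n-1,0] = n := by
  rw [tri]
  simp only [Matrix.cons_val_zero, Matrix.cons_val_one, Matrix.head_cons,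
    Matrix.cons_val_two, Matrix.tail_cons]
  have e1 : 1 + (n - 1 + 0) = n := by omega
  have e2 : n - 1 + 0 = n - 1 := by omega
  rw [e1, e2, Nat.choose_one_right]; simp

private lemma deg4 (n : ℕ) (h : 1 ≤ n) : Nat.multinomial Finset.univ ![1,0,n-1] = n := by
  rw [tri]
  simp only [Matrix.cons_val_zero, Matrix.cons_val_one, Matrix.head_cons,
    Matrix.cons_val_two, Matrix.tail_cons]
  have e1 : 1 + (0 + (n - 1)) = n := by omega
  rw [e1, Nat.choose_one_right]; simp

private lemma deg5 (n : ℕ) (h : 1 ≤ n) : Nat.multinomial Finset.univ ![0,n-1,1] = n := by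
  rw [tri]
  simp only [Matrix.cons_val_zero, Matrix.cons_val_one, Matrix.head_cons,
    Matrix.cons_val_two, Matrix.tail_cons]
  have e1 : 0 + (n - 1 + 1) = n := by omega
  have e2 : n - 1 + 1 = n := by omega
  rw [e1, e2, Nat.choose_symm (by omega : 1 ≤ n), Nat.choose_one_right]; simp

private lemma deg6 (n : ℕ) (h : 1 ≤ n) : Nat.multinomial Finset.univ ![0,1,n-1] = n := by
  rw [tri]
  simp only [Matrix.cons_val_zero, Matrix.cons_val_one, Matrix.head_cons,
    Matrix.cons_val_two, Matrix.tail_cons]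
  have e1 : 0 + (1 + (n - 1)) = n := by omega
  rw [e1, Nat.choose_one_right]
  simp; omega

private lemma bound (x y z a : ℕ) (ha : 2 ≤ a)
    (h : (x + (y + z)).choose x * (y + z).choose y = a) :
    x ≤ a ∧ y ≤ a ∧ z ≤ a := by
  have h1 : 1 ≤ (y + z).choose y := Nat.choose_pos (Nat.le_add_right y z)
  have h2 : 1 ≤ (x + (y + z)).choose x := Nat.choose_pos (Nat.le_add_right _ _)
  have cl : ∀ p q : ℕ, 1 ≤ q → p + 1 ≤ (p + q).choose p := by
    intro p q hq
    calc p + 1 = (p + 1).choose p := by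
          rw [← Nat.choose_symm (by omega : p ≤ p + 1)]; simp
      _ ≤ (p + q).choose p := Nat.choose_le_choose p (by omega)
  have key : 1 ≤ x → (y + z) + 1 ≤ (x + (y + z)).choose x := by
    intro h0
    calc (y + z) + 1 ≤ ((y + z) + x).choose (y + z) := cl (y + z) x h0
      _ = (x + (y + z)).choose (y + z) := by rw [Nat.add_comm]
      _ = (x + (y + z)).choose x := by
            rw [← Nat.choose_symm (Nat.le_add_right x (y + z))]; simp
  have hx : x ≤ a := by
    rcases Nat.eq_zero_or_pos (y + z) with h0 | h0
    · have hy : y = 0 := by omega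
      have hz : z = 0 := by omega
      subst hy hz; simp at h; omega
    · have := cl x (y + z) h0
      nlinarith
  refine ⟨hx, ?_, ?_⟩
  · rcases Nat.eq_zero_or_pos x with h0 | h0
    · rcases Nat.eq_zero_or_pos z with h0' | h0'
      · exfalso; subst h0 h0'; simp at h; omega
      · have := cl y z h0'
        nlinarith
    · have := key h0; nlinarith
  · rcases Nat.eq_zero_or_pos x with h0 | h0
    · rcases Nat.eq_zero_or_pos y with h0' | h0'
      · exfalso; subst h0 h0'; simp at h; omega
      · have : z + 1 ≤ (y + z).choose y := by
          calc z + 1 ≤ (z + y).choose z := cl z y h0'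
            _ = (y + z).choose z := by rw [Nat.add_comm]
            _ = (y + z).choose y := by
                  rw [← Nat.choose_symm (Nat.le_add_right y z)]; simp
        nlinarith
    · have := key h0; nlinarith

private def T : Finset (Fin 3 → ℕ) :=
  {![17,11,9], ![17,9,11], ![11,17,9], ![11,9,17], ![9,17,11], ![9,11,17],
   ![19,11,8], ![19,8,11], ![11,19,8], ![11,8,19], ![8,19,11], ![8,11,19],
   ![19,14,6], ![19,6,14], ![14,19,6], ![14,6,19], ![6,19,14], ![6,14,19],
   ![19,16,5], ![19,5,16], ![16,19,5], ![16,5,19], ![5,19,16], ![5,16,19],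
   ![2671465728531600-1,1,0], ![2671465728531600-1,0,1],
   ![1,2671465728531600-1,0], ![1,0,2671465728531600-1],
   ![0,2671465728531600-1,1], ![0,1,2671465728531600-1]}

set_option maxRecDepth 8000 in
theorem N3_big_value :
    30 ≤ Nk 3 2671465728531600 ∧
    Nat.multinomial Finset.univ ![17, 11, 9] = 2671465728531600 ∧
    Nat.multinomial Finset.univ ![19, 11, 8] = 2671465728531600 ∧
    Nat.multinomial Finset.univ ![19, 14, 6] = 2671465728531600 ∧
    Nat.multinomial Finset.univ ![19, 16, 5] = 2671465728531600 ∧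
    Nat.multinomial Finset.univ ![2671465728531600 - 1, 1, 0] = 2671465728531600 := by
  refine ⟨?_, by decide, by decide, by decide, by decide,
    deg1 2671465728531600 (by norm_num)⟩
  rw [Nk]
  set S : Set (Fin 3 → ℕ) :=
    {m : Fin 3 → ℕ | Nat.multinomial Finset.univ m = 2671465728531600} with hS
  have hsub : (↑T : Set (Fin 3 → ℕ)) ⊆ S := by
    intro m hm
    simp only [T, Finset.coe_insert, Set.mem_insert_iff, Finset.coe_singleton,
      Set.mem_singleton_iff] at hm
    obtain h|h|h|h|h|h|h|h|h|h|h|h|h|h|h|h|h|h|h|h|h|h|h|h|h|h|h|h|h|h := hm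
    · subst h; decide
    · subst h; decide
    · subst h; decide
    · subst h; decide
    · subst h; decide
    · subst h; decide
    · subst h; decide
    · subst h; decide
    · subst h; decide
    · subst h; decide
    · subst h; decide
    · subst h; decide
    · subst h; decide
    · subst h; decide
    · subst h; decide
    · subst h; decide
    · subst h; decide
    · subst h; decide
    · subst h; decide
    · subst h; decide
    · subst h; decide
    · subst h; decide
    · subst h; decide
    · subst h; decide
    · subst h; exact deg1 2671465728531600 (by norm_num)
    · subst h; exact deg2 2671465728531600 (by norm_num)
    · subst h; exact deg3 2671465728531600 (by norm_num)
    · subst h; exact deg4 2671465728531600 (by norm_num)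
    · subst h; exact deg5 2671465728531600 (by norm_num)
    · subst h; exact deg6 2671465728531600 (by norm_num)
  have hfin : S.Finite := by
    apply Set.Finite.subset
      (Set.finite_Icc (fun _ => 0 : Fin 3 → ℕ) (fun _ => 2671465728531600))
    intro m hm
    have hm' : Nat.multinomial Finset.univ m = 2671465728531600 := hm
    rw [tri] at hm'
    have hb := bound (m 0) (m 1) (m 2) 2671465728531600 (by norm_num) hm'
    constructor
    · intro i; exact Nat.zero_le _
    · intro i; fin_cases i <;> simp <;> omega
  calc (30 : ℕ) = (↑T : Set (Fin 3 → ℕ)).ncard := by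
        rw [Set.ncard_coe_finset]; decide
    _ ≤ S.ncard := Set.ncard_le_ncard hsub hfin
end
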